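/- arXiv:1209.2678 — 2 statements merged into one kernel-verified Lean document; each statement's English description precedes it below -/
import Mathlib

section
/- For every integer K ≥ 1 and every real ε ∈ (0, 1/(2K)), there exist integers N₁, N₂ ≥ 3 and J with 1 ≤ J ≤ K(N₁+N₂) (depending on ε and K) such that: (i) Q_N(𝐕_{K,N₁,N₂}, G_{K,N₁,N₂}) < 1 − 1/(2K) < 1 − ε < Q_N(𝐔_{K,N₁,N₂,J}, G_{K,N₁,N₂}), and (ii) the Jaccard similarity satisfies S(𝐕_{K,N₁,N₂}, 𝐔_{K,N₁,N₂,J}) < ε. -/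
open scoped Classical

noncomputable section

namespace BadComm

variable {V : Type*} [Fintype V]

/-- The finset of edges of a simple graph `G`. -/
def edgeFin (G : SimpleGraph V) : Finset (Sym2 V) :=
  Finset.univ.filter (fun e => e ∈ G.edgeSet)

/-- The number of edges `m` of `G`. -/
def numEdges (G : SimpleGraph V) : ℕ := (edgeFin G).card

/-- The degree of a node. -/
def deg (G : SimpleGraph V) (v : V) : ℕ := (Finset.univ.filter (fun w => G.Adj v w)).card

/-- A clustering is encoded as a labelling `c : V → ℕ`; cluster `k` is the set of nodes
with label `k`.  `clusterDeg G c k` is the total degree of cluster `k`. -/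
def clusterDeg (G : SimpleGraph V) (c : V → ℕ) (k : ℕ) : ℕ :=
  ∑ v ∈ Finset.univ.filter (fun v => c v = k), deg G v

/-- An unordered pair is intracluster when all of its members carry the same label. -/
def sameCluster (c : V → ℕ) (p : Sym2 V) : Prop :=
  ∀ u ∈ p, ∀ v ∈ p, c u = c v

/-- The number of intracluster edges, `∑ₖ |Eₖ|`. -/
def intraEdges (G : SimpleGraph V) (c : V → ℕ) : ℕ :=
  ((edgeFin G).filter (fun e => sameCluster c e)).card

/-- The number of extracluster edges. -/
def extraEdges (G : SimpleGraph V) (c : V → ℕ) : ℕ :=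
  ((edgeFin G).filter (fun e => ¬ sameCluster c e)).card

/-- The intracluster edge fraction `Q_f = (∑ₖ |Eₖ|)/m`. -/
def Qf (G : SimpleGraph V) (c : V → ℕ) : ℝ := (intraEdges G c : ℝ) / (numEdges G : ℝ)

/-- The null-model term `Q_0 = ∑ₖ (deg(Vₖ)/(2m))²` (summed over the nonempty clusters). -/
def Q0 (G : SimpleGraph V) (c : V → ℕ) : ℝ :=
  ∑ k ∈ Finset.univ.image c, ((clusterDeg G c k : ℝ) / (2 * (numEdges G : ℝ))) ^ 2

/-- Newman's modularity `Q_N = Q_f - Q_0`. -/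
def QN (G : SimpleGraph V) (c : V → ℕ) : ℝ := Qf G c - Q0 G c

/-- The number of (nonempty) clusters of a labelling. -/
def numClusters (c : V → ℕ) : ℕ := (Finset.univ.image c).card

/-- The unordered pairs of distinct nodes. -/
def offDiagPairs (V : Type*) [Fintype V] : Finset (Sym2 V) :=
  Finset.univ.filter (fun p => ¬ p.IsDiag)

/-- Number of node pairs in the same cluster under both clusterings. -/
def a11 (c1 c2 : V → ℕ) : ℕ :=
  ((offDiagPairs V).filter (fun p => sameCluster c1 p ∧ sameCluster c2 p)).card

/-- Number of node pairs in the same cluster under `c1` but not under `c2`. -/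
def a10 (c1 c2 : V → ℕ) : ℕ :=
  ((offDiagPairs V).filter (fun p => sameCluster c1 p ∧ ¬ sameCluster c2 p)).card

/-- Number of node pairs in the same cluster under `c2` but not under `c1`. -/
def a01 (c1 c2 : V → ℕ) : ℕ :=
  ((offDiagPairs V).filter (fun p => ¬ sameCluster c1 p ∧ sameCluster c2 p)).card

/-- The Jaccard similarity index of two clusterings. -/
def jaccard (c1 c2 : V → ℕ) : ℝ :=
  (a11 c1 c2 : ℝ) / ((a10 c1 c2 : ℝ) + (a01 c1 c2 : ℝ) + (a11 c1 c2 : ℝ))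

/-- Number of (unordered) node pairs lying in the same cluster. -/
def samePairCount (c : V → ℕ) : ℕ :=
  ((offDiagPairs V).filter (fun p => sameCluster c p)).card

/-- The nodes `0,…,n-1` are split into consecutive blocks of alternating sizes
`N₁,N₂,N₁,N₂,…`; `blockIdx N1 N2 v` is the index of the block of node `v`. -/
def blockIdx (N1 N2 v : ℕ) : ℕ :=
  2 * (v / (N1 + N2)) + (if v % (N1 + N2) < N1 then 0 else 1)

/-- The graph `G_{K,N₁,N₂}`: a disjoint union of `K` paths on `N₁` nodes and `K` paths on
`N₂` nodes, arranged as alternating consecutive blocks of `{0,…,K(N₁+N₂)-1}`. -/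
def graphG (K N1 N2 : ℕ) : SimpleGraph (Fin (K * (N1 + N2))) where
  Adj u v := (u.val + 1 = v.val ∨ v.val + 1 = u.val) ∧
             blockIdx N1 N2 u.val = blockIdx N1 N2 v.val
  symm := ⟨by rintro u v ⟨h1, h2⟩; exact ⟨h1.symm, h2.symm⟩⟩
  loopless := ⟨by rintro u ⟨h1 | h1, -⟩ <;> omega⟩

/-- The connected graph `H_{K,N₁,N₂}`: the path on all of `{0,…,K(N₁+N₂)-1}` together with,
inside each block, all chords joining nodes of the block at distance two. -/
def graphH (K N1 N2 : ℕ) : SimpleGraph (Fin (K * (N1 + N2))) where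
  Adj u v := (u.val + 1 = v.val ∨ v.val + 1 = u.val) ∨
             ((u.val + 2 = v.val ∨ v.val + 2 = u.val) ∧
              blockIdx N1 N2 u.val = blockIdx N1 N2 v.val)
  symm := ⟨by
    rintro u v (h1 | ⟨h2, h3⟩)
    · exact Or.inl h1.symm
    · exact Or.inr ⟨h2.symm, h3.symm⟩⟩
  loopless := ⟨by rintro u ((h | h) | ⟨h | h, -⟩) <;> omega⟩

/-- The natural clustering `𝐕_{K,N₁,N₂}`: the clusters are the `2K` blocks. -/
def naturalLabel (N1 N2 : ℕ) {n : ℕ} : Fin n → ℕ := fun v => blockIdx N1 N2 v.val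

/-- The balanced clustering `𝐔_{K,N₁,N₂,J}` with `L = ⌊n/J⌋`: clusters
`U_j = {(j-1)L+1,…,jL}` for `j = 1,…,J`, plus the remainder cluster `U_{J+1}`. -/
def uLabel (J : ℕ) {n : ℕ} : Fin n → ℕ := fun v => min (v.val / (n / J)) J

lemma sameCluster_mk (c : V → ℕ) (a b : V) : sameCluster c s(a,b) ↔ c a = c b := by
  constructor
  · intro h; exact h a (by simp) b (by simp)
  · intro h u hu v hv
    rw [Sym2.mem_iff] at hu hv
    rcases hu with rfl | rfl <;> rcases hv with rfl | rfl <;> omega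

lemma mem_edgeFin {G : SimpleGraph V} {e : Sym2 V} : e ∈ edgeFin G ↔ e ∈ G.edgeSet := by
  simp [edgeFin]

lemma blockIdx_eval (N1 N2 q i : ℕ) (hs : 0 < N1 + N2) (hi : i < N1 + N2) :
    blockIdx N1 N2 (q * (N1 + N2) + i) = 2 * q + (if i < N1 then 0 else 1) := by
  unfold blockIdx
  rw [show q * (N1 + N2) + i = i + q * (N1 + N2) by ring, Nat.add_mul_mod_self_right,
    Nat.mod_eq_of_lt hi, Nat.add_mul_div_right _ _ hs, Nat.div_eq_of_lt hi]
  omega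

lemma decomp_unique {s q q' r r' : ℕ} (h : q * s + r = q' * s + r') (hr : r < s) (hr' : r' < s) :
    q = q' ∧ r = r' := by
  have hs : 0 < s := by omega
  have h1 : (q * s + r) / s = q := by
    rw [show q * s + r = r + q * s by ring, Nat.add_mul_div_right _ _ hs, Nat.div_eq_of_lt hr]; omega
  have h2 : (q' * s + r') / s = q' := by
    rw [show q' * s + r' = r' + q' * s by ring, Nat.add_mul_div_right _ _ hs,
      Nat.div_eq_of_lt hr']; omega
  rw [h, h2] at h1; subst h1
  omega

lemma decomp (s v : ℕ) (hs : 0 < s) : (v / s) * s + v % s = v ∧ v % s < s := by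
  exact ⟨by rw [mul_comm]; exact Nat.div_add_mod v s, Nat.mod_lt _ hs⟩

lemma deg_le_two (K N1 N2 : ℕ) (v : Fin (K * (N1 + N2))) : deg (graphG K N1 N2) v ≤ 2 := by
  unfold deg
  have h := Finset.card_le_card_of_injOn (fun w : Fin (K * (N1+N2)) => w.val)
    (s := Finset.univ.filter (fun w => (graphG K N1 N2).Adj v w))
    (t := ({v.val + 1, v.val - 1} : Finset ℕ))
    (fun w hw => by
      simp only [Finset.mem_coe, Finset.mem_filter, Finset.mem_univ, true_and] at hw
      have h1 : (v.val + 1 = w.val ∨ w.val + 1 = v.val) := hw.1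
      simp only [Finset.mem_coe, Finset.mem_insert, Finset.mem_singleton]
      omega)
    (fun a _ b _ hab => Fin.val_injective hab)
  refine h.trans ?_
  refine (Finset.card_insert_le _ _).trans ?_
  rw [Finset.card_singleton]


-- NEW BATCH

lemma bound_lt {q K s r : ℕ} (hq : q < K) (hr : r < s) : q * s + r < K * s := by
  calc q * s + r < q * s + s := Nat.add_lt_add_left hr _
    _ = (q + 1) * s := (Nat.succ_mul q s).symm
    _ ≤ K * s := Nat.mul_le_mul_right s hq

lemma edge_struct {K N1 N2 : ℕ} {e : Sym2 (Fin (K * (N1 + N2)))}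
    (he : e ∈ edgeFin (graphG K N1 N2)) :
    ∃ a b : Fin (K * (N1 + N2)), e = s(a, b) ∧ b.val = a.val + 1 ∧
      blockIdx N1 N2 a.val = blockIdx N1 N2 b.val := by
  rw [mem_edgeFin] at he
  induction e using Sym2.ind with
  | _ x y =>
    rw [SimpleGraph.mem_edgeSet] at he
    have h1 : (x.val + 1 = y.val ∨ y.val + 1 = x.val) := he.1
    have h2 : blockIdx N1 N2 x.val = blockIdx N1 N2 y.val := he.2
    rcases h1 with h | h
    · exact ⟨x, y, rfl, h.symm, h2⟩
    · exact ⟨y, x, Sym2.eq_swap.symm, h.symm, h2.symm⟩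

def minV {n : ℕ} (e : Sym2 (Fin n)) : ℕ :=
  Sym2.lift ⟨fun a b => min a.val b.val, fun a b => min_comm _ _⟩ e

lemma minV_mk {n : ℕ} (a b : Fin n) : minV s(a, b) = min a.val b.val := rfl

lemma edge_card_le {K N1 N2 : ℕ} (S : Finset (Sym2 (Fin (K * (N1 + N2)))))
    (hS : S ⊆ edgeFin (graphG K N1 N2)) (T : Finset ℕ) (hT : ∀ e ∈ S, minV e ∈ T) :
    S.card ≤ T.card := by
  refine Finset.card_le_card_of_injOn minV hT ?_
  intro e1 h1 e2 h2 hmin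
  obtain ⟨a, b, rfl, hb, -⟩ := edge_struct (hS h1)
  obtain ⟨a', b', rfl, hb', -⟩ := edge_struct (hS h2)
  rw [minV_mk, minV_mk] at hmin
  have ha : a = a' := Fin.val_injective (by omega)
  have hbb : b = b' := Fin.val_injective (by omega)
  rw [ha, hbb]

lemma numEdges_le {K N1 N2 : ℕ} : numEdges (graphG K N1 N2) ≤ K * (N1 + N2) := by
  have := edge_card_le (edgeFin (graphG K N1 N2)) (le_refl _) (Finset.range (K * (N1 + N2)))
    (fun e he => by
      obtain ⟨a, b, rfl, hb, -⟩ := edge_struct he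
      rw [minV_mk, Finset.mem_range]
      have := a.isLt
      omega)
  simpa [numEdges] using this

def toF (K N1 N2 : ℕ) (h : 0 < K * (N1 + N2)) (x : ℕ) : Fin (K * (N1 + N2)) :=
  if hx : x < K * (N1 + N2) then ⟨x, hx⟩ else ⟨0, h⟩

lemma toF_val {K N1 N2 x : ℕ} (h : 0 < K * (N1 + N2)) (hx : x < K * (N1 + N2)) :
    (toF K N1 N2 h x).val = x := by
  unfold toF; rw [dif_pos hx]

lemma le_numEdges {K N1 N2 : ℕ} (hK : 1 ≤ K) (hN1 : 3 ≤ N1) (hN2 : 3 ≤ N2) :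
    K * (N1 + N2 - 2) ≤ numEdges (graphG K N1 N2) := by
  set s := N1 + N2 with hsdef
  have hn : 0 < K * s := by positivity
  set F : ℕ → ℕ := fun i => if i < N1 - 1 then i else i + 1 with hF
  have key := Finset.card_le_card_of_injOn
    (f := fun p : ℕ × ℕ => s(toF K N1 N2 hn (p.1 * s + F p.2), toF K N1 N2 hn (p.1 * s + F p.2 + 1)))
    (s := Finset.range K ×ˢ Finset.range (s - 2)) (t := edgeFin (graphG K N1 N2))
    ?_ ?_
  · simpa [numEdges] using key
  · rintro ⟨q, i⟩ hp
    simp only [Finset.mem_coe, Finset.mem_product, Finset.mem_range] at hp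
    obtain ⟨hq, hi⟩ := hp
    have hFi : F i < s - 1 := by simp only [hF]; split_ifs <;> omega
    have hA1 : q * s + F i < K * s := bound_lt hq (by omega)
    have hA2 : q * s + F i + 1 < K * s := by
      have := bound_lt hq (show F i + 1 < s by omega)
      omega
    rw [Finset.mem_coe, mem_edgeFin, SimpleGraph.mem_edgeSet]
    constructor
    · left; rw [toF_val hn hA1, toF_val hn hA2]
    · rw [toF_val hn hA1, toF_val hn hA2,
        show q * s + F i + 1 = q * s + (F i + 1) by ring,
        blockIdx_eval N1 N2 q (F i) (by omega) (by omega),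
        blockIdx_eval N1 N2 q (F i + 1) (by omega) (by omega)]
      have : F i < N1 ↔ F i + 1 < N1 := by simp only [hF]; split_ifs <;> omega
      split_ifs with p1 p2 p2 <;> omega
  · rintro ⟨q, i⟩ hp ⟨q', i'⟩ hp' heq
    simp only [Finset.mem_product, Finset.mem_range, Finset.mem_coe] at hp hp'
    obtain ⟨hq, hi⟩ := hp
    obtain ⟨hq', hi'⟩ := hp'
    have hFi : F i < s - 1 := by simp only [hF]; split_ifs <;> omega
    have hFi' : F i' < s - 1 := by simp only [hF]; split_ifs <;> omega
    have hA1 : q * s + F i < K * s := bound_lt hq (by omega)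
    have hA2 : q * s + F i + 1 < K * s := by
      have := bound_lt hq (show F i + 1 < s by omega); omega
    have hA1' : q' * s + F i' < K * s := bound_lt hq' (by omega)
    have hA2' : q' * s + F i' + 1 < K * s := by
      have := bound_lt hq' (show F i' + 1 < s by omega); omega
    rw [Sym2.eq_iff] at heq
    have hval : q * s + F i = q' * s + F i' := by
      rcases heq with ⟨h1, h2⟩ | ⟨h1, h2⟩
      · have := congrArg Fin.val h1
        rwa [toF_val hn hA1, toF_val hn hA1'] at this
      · have e1 := congrArg Fin.val h1
        have e2 := congrArg Fin.val h2
        rw [toF_val hn hA1, toF_val hn hA2'] at e1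
        rw [toF_val hn hA2, toF_val hn hA1'] at e2
        omega
    obtain ⟨hqq, hFF⟩ := decomp_unique hval (by omega) (by omega)
    have : i = i' := by
      simp only [hF] at hFF; split_ifs at hFF <;> omega
    simp [hqq, this]


-- BATCH 3
lemma filter_card_le_Ico {n : ℕ} (P : Fin n → Prop) [DecidablePred P] (a b : ℕ)
    (h : ∀ v : Fin n, P v → a ≤ v.val ∧ v.val < b) :
    (Finset.univ.filter P).card ≤ b - a := by
  have := Finset.card_le_card_of_injOn (fun v : Fin n => v.val)
    (s := Finset.univ.filter P) (t := Finset.Ico a b)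
    (fun v hv => by
      simp only [Finset.mem_coe, Finset.mem_filter, Finset.mem_univ, true_and] at hv
      rw [Finset.mem_coe, Finset.mem_Ico]; exact h v hv)
    (fun x _ y _ hxy => Fin.val_injective hxy)
  simpa using this

lemma fiber_ge {n : ℕ} (P : Fin n → Prop) [DecidablePred P] (a b : ℕ) (hb : b ≤ n)
    (h : ∀ x : ℕ, a ≤ x → x < b → ∀ hx : x < n, P ⟨x, hx⟩) :
    b - a ≤ (Finset.univ.filter P).card := by
  rcases Nat.eq_zero_or_pos n with rfl | hn
  · simp only [Nat.le_zero] at hb; omega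
  have := Finset.card_le_card_of_injOn
    (fun x : ℕ => if hx : x < n then (⟨x, hx⟩ : Fin n) else ⟨0, hn⟩)
    (s := Finset.Ico a b) (t := Finset.univ.filter P)
    (fun x hx => by
      rw [Finset.mem_coe, Finset.mem_Ico] at hx
      have hxn : x < n := by omega
      show (if hx : x < n then (⟨x, hx⟩ : Fin n) else ⟨0, hn⟩) ∈ _
      rw [dif_pos hxn]
      simp only [Finset.mem_coe, Finset.mem_filter, Finset.mem_univ, true_and]
      exact h x hx.1 hx.2 hxn)
    (fun x hx y hy hxy => by
      rw [Finset.mem_coe, Finset.mem_Ico] at hx hy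
      have hxn : x < n := by omega
      have hyn : y < n := by omega
      have hxy' : (if hx : x < n then (⟨x, hx⟩ : Fin n) else ⟨0, hn⟩) =
          (if hy : y < n then (⟨y, hy⟩ : Fin n) else ⟨0, hn⟩) := hxy
      rw [dif_pos hxn, dif_pos hyn] at hxy'
      exact congrArg Fin.val hxy')
  simpa using this

lemma uLabel_le {n J : ℕ} (v : Fin n) : uLabel J v ≤ J := min_le_right _ _

lemma fiberU_le {n J : ℕ} (hJ : 1 ≤ J) (hL : 0 < n / J) {k : ℕ} (hk : k < J) :
    (Finset.univ.filter (fun v : Fin n => uLabel J v = k)).card ≤ n / J := by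
  have h := filter_card_le_Ico (fun v : Fin n => uLabel J v = k)
    (k * (n / J)) (k * (n / J) + (n / J)) ?_
  · rwa [Nat.add_sub_cancel_left] at h
  · intro v hv
    unfold uLabel at hv
    have hdiv : v.val / (n / J) = k := by omega
    constructor
    · calc k * (n / J) = (v.val / (n / J)) * (n / J) := by rw [hdiv]
        _ ≤ v.val := Nat.div_mul_le_self _ _
    · have h1 : v.val / (n / J) < k + 1 := by omega
      have h2 := (Nat.div_lt_iff_lt_mul hL).1 h1
      calc v.val < (k + 1) * (n / J) := h2
        _ = k * (n / J) + (n / J) := by ring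

lemma fiberU_last_le {n J : ℕ} (hJ : 1 ≤ J) (hL : 0 < n / J) :
    (Finset.univ.filter (fun v : Fin n => uLabel J v = J)).card ≤ J := by
  have hmod : J * (n / J) + n % J = n := Nat.div_add_mod n J
  have hmodlt : n % J < J := Nat.mod_lt _ (by omega)
  have h := filter_card_le_Ico (fun v : Fin n => uLabel J v = J) (J * (n / J))
    (J * (n / J) + n % J) ?_
  · rw [Nat.add_sub_cancel_left] at h
    exact h.trans (le_of_lt hmodlt)
  · intro v hv
    unfold uLabel at hv
    have hdiv : J ≤ v.val / (n / J) := by omega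
    refine ⟨(Nat.le_div_iff_mul_le hL).1 hdiv, ?_⟩
    rw [hmod]
    exact v.isLt

lemma clusterDeg_le_two_mul {K N1 N2 : ℕ} (c : Fin (K * (N1 + N2)) → ℕ) (k : ℕ) :
    clusterDeg (graphG K N1 N2) c k ≤
      2 * (Finset.univ.filter (fun v => c v = k)).card := by
  unfold clusterDeg
  have := Finset.sum_le_card_nsmul (Finset.univ.filter (fun v => c v = k))
    (fun v => deg (graphG K N1 N2) v) 2 (fun v _ => deg_le_two K N1 N2 v)
  simpa [mul_comm] using this

lemma two_le_deg {K N1 N2 : ℕ} (v w1 w2 : Fin (K * (N1 + N2)))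
    (h1 : (graphG K N1 N2).Adj v w1) (h2 : (graphG K N1 N2).Adj v w2) (hne : w1 ≠ w2) :
    2 ≤ deg (graphG K N1 N2) v := by
  have hsub : ({w1, w2} : Finset (Fin (K * (N1 + N2)))) ⊆
      Finset.univ.filter (fun w => (graphG K N1 N2).Adj v w) := by
    intro w hw
    simp only [Finset.mem_insert, Finset.mem_singleton] at hw
    rcases hw with rfl | rfl <;> simp [h1, h2]
  calc 2 = ({w1, w2} : Finset (Fin (K * (N1 + N2)))).card := (Finset.card_pair hne).symm
    _ ≤ _ := Finset.card_le_card hsub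


lemma extra_le_cut {K N1 N2 J : ℕ} (hJ : 1 ≤ J) (hJ2 : J * J ≤ K * (N1 + N2)) :
    ((edgeFin (graphG K N1 N2)).filter (fun e => ¬ sameCluster (uLabel J) e)).card ≤ J := by
  have hn : J ≤ K * (N1 + N2) := le_trans (Nat.le_mul_of_pos_left J (by omega)) hJ2
  have hL : J ≤ K * (N1 + N2) / J := (Nat.le_div_iff_mul_le (by omega)).2 hJ2
  have hL0 : 0 < K * (N1 + N2) / J := by omega
  have key := edge_card_le ((edgeFin (graphG K N1 N2)).filter
      (fun e => ¬ sameCluster (uLabel J) e)) (Finset.filter_subset _ _)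
    ((Finset.Icc 1 J).image (fun q => q * (K * (N1 + N2) / J) - 1)) ?_
  · refine key.trans ?_
    refine (Finset.card_image_le).trans ?_
    rw [Nat.card_Icc]
    omega
  · intro e he
    rw [Finset.mem_filter] at he
    obtain ⟨hedge, hne⟩ := he
    obtain ⟨a, b, rfl, hb, -⟩ := edge_struct hedge
    rw [sameCluster_mk] at hne
    rw [minV_mk]
    unfold uLabel at hne
    rw [hb] at hne
    have hdle : a.val / (K * (N1 + N2) / J) ≤ (a.val + 1) / (K * (N1 + N2) / J) :=
      Nat.div_le_div_right (by omega)
    have hdlt : a.val / (K * (N1 + N2) / J) < (a.val + 1) / (K * (N1 + N2) / J) := by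
      rcases lt_or_eq_of_le hdle with h | h
      · exact h
      · exfalso; rw [h] at hne; omega
    have h1 : ((a.val + 1) / (K * (N1 + N2) / J)) * (K * (N1 + N2) / J) ≤ a.val + 1 :=
      Nat.div_mul_le_self _ _
    have h2 : a.val < ((a.val + 1) / (K * (N1 + N2) / J)) * (K * (N1 + N2) / J) := by
      by_contra hcon
      push_neg at hcon
      have : (a.val + 1) / (K * (N1 + N2) / J) ≤ a.val / (K * (N1 + N2) / J) :=
        (Nat.le_div_iff_mul_le hL0).2 hcon
      omega
    have hql : ((a.val + 1) / (K * (N1 + N2) / J)) * (K * (N1 + N2) / J) = a.val + 1 := by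
      omega
    have hq1 : 1 ≤ (a.val + 1) / (K * (N1 + N2) / J) := by
      rcases Nat.eq_zero_or_pos ((a.val + 1) / (K * (N1 + N2) / J)) with hz | h
      · rw [hz] at hql; simp at hql
      · exact h
    have hqJ : (a.val + 1) / (K * (N1 + N2) / J) ≤ J := by
      have hxn : a.val + 1 < K * (N1 + N2) := by rw [← hb]; exact b.isLt
      have hmod : J * (K * (N1 + N2) / J) + K * (N1 + N2) % J = K * (N1 + N2) :=
        Nat.div_add_mod _ J
      have hmodlt : K * (N1 + N2) % J < J := Nat.mod_lt _ (by omega)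
      have hlt : ((a.val + 1) / (K * (N1 + N2) / J)) * (K * (N1 + N2) / J) <
          (J + 1) * (K * (N1 + N2) / J) := by
        have he1 : (J + 1) * (K * (N1 + N2) / J) = J * (K * (N1 + N2) / J) +
            (K * (N1 + N2) / J) := by ring
        omega
      have := Nat.lt_of_mul_lt_mul_right hlt
      omega
    rw [Finset.mem_image]
    refine ⟨(a.val + 1) / (K * (N1 + N2) / J), Finset.mem_Icc.2 ⟨hq1, hqJ⟩, ?_⟩
    omega

lemma adjG {K N1 N2 : ℕ} (u v : Fin (K * (N1 + N2)))
    (h1 : u.val + 1 = v.val ∨ v.val + 1 = u.val)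
    (h2 : blockIdx N1 N2 u.val = blockIdx N1 N2 v.val) : (graphG K N1 N2).Adj u v :=
  ⟨h1, h2⟩

lemma clusterDeg_odd_ge {K N1 N2 : ℕ} (hN1 : 3 ≤ N1) (hN2 : 3 ≤ N2)
    {q : ℕ} (hq : q < K) :
    2 * (N2 - 2) ≤ clusterDeg (graphG K N1 N2) (naturalLabel N1 N2) (2 * q + 1) := by
  have hs : 0 < N1 + N2 := by omega
  have hval : ∀ x : ℕ, q * (N1 + N2) + N1 + 1 ≤ x → x < q * (N1 + N2) + N1 + (N2 - 1) →
      x < K * (N1 + N2) ∧ blockIdx N1 N2 x = 2 * q + 1 ∧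
      blockIdx N1 N2 (x - 1) = 2 * q + 1 ∧ blockIdx N1 N2 (x + 1) = 2 * q + 1 := by
    intro x hx1 hx2
    have hxlt : x < K * (N1 + N2) := by
      have := bound_lt hq (show N1 + (N2 - 1) < N1 + N2 by omega)
      omega
    have e0 : blockIdx N1 N2 x = 2 * q + 1 := by
      have hx : x = q * (N1 + N2) + (x - q * (N1 + N2)) := by omega
      rw [hx, blockIdx_eval N1 N2 q _ hs (by omega), if_neg (by omega)]
    have e1 : blockIdx N1 N2 (x - 1) = 2 * q + 1 := by
      have hx : x - 1 = q * (N1 + N2) + (x - 1 - q * (N1 + N2)) := by omega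
      rw [hx, blockIdx_eval N1 N2 q _ hs (by omega), if_neg (by omega)]
    have e2 : blockIdx N1 N2 (x + 1) = 2 * q + 1 := by
      have hx : x + 1 = q * (N1 + N2) + (x + 1 - q * (N1 + N2)) := by omega
      rw [hx, blockIdx_eval N1 N2 q _ hs (by omega), if_neg (by omega)]
    exact ⟨hxlt, e0, e1, e2⟩
  have hsub : ∀ v : Fin (K * (N1 + N2)),
      (q * (N1 + N2) + N1 + 1 ≤ v.val ∧ v.val < q * (N1 + N2) + N1 + (N2 - 1)) →
      naturalLabel N1 N2 v = 2 * q + 1 := by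
    intro v ⟨h1, h2⟩
    exact (hval v.val h1 h2).2.1
  have hdeg : ∀ v : Fin (K * (N1 + N2)),
      (q * (N1 + N2) + N1 + 1 ≤ v.val ∧ v.val < q * (N1 + N2) + N1 + (N2 - 1)) →
      2 ≤ deg (graphG K N1 N2) v := by
    intro v ⟨h1, h2⟩
    obtain ⟨hxlt, e0, e1, e2⟩ := hval v.val h1 h2
    have hw2lt : v.val + 1 < K * (N1 + N2) := by
      have := bound_lt hq (show N1 + (N2 - 1) < N1 + N2 by omega)
      omega
    refine two_le_deg v ⟨v.val - 1, by omega⟩ ⟨v.val + 1, hw2lt⟩ ?_ ?_ ?_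
    · refine adjG _ _ (Or.inr (by simp; omega)) ?_
      simp only
      rw [e0, e1]
    · refine adjG _ _ (Or.inl (by simp)) ?_
      simp only
      rw [e0, e2]
    · intro hcon
      have := congrArg Fin.val hcon
      simp only at this
      omega
  unfold clusterDeg
  calc 2 * (N2 - 2)
      = 2 * ((q * (N1 + N2) + N1 + (N2 - 1)) - (q * (N1 + N2) + N1 + 1)) := by omega
    _ ≤ 2 * (Finset.univ.filter (fun v : Fin (K * (N1 + N2)) =>
          q * (N1 + N2) + N1 + 1 ≤ v.val ∧ v.val < q * (N1 + N2) + N1 + (N2 - 1))).card := by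
        refine Nat.mul_le_mul_left 2 ?_
        refine fiber_ge _ _ _ ?_ ?_
        · have := bound_lt hq (show N1 + (N2 - 1) < N1 + N2 by omega)
          omega
        · intro x hx1 hx2 hxn
          exact ⟨hx1, hx2⟩
    _ ≤ ∑ v ∈ Finset.univ.filter (fun v : Fin (K * (N1 + N2)) =>
          q * (N1 + N2) + N1 + 1 ≤ v.val ∧ v.val < q * (N1 + N2) + N1 + (N2 - 1)),
          deg (graphG K N1 N2) v := by
        have := Finset.card_nsmul_le_sum (Finset.univ.filter (fun v : Fin (K * (N1 + N2)) =>
          q * (N1 + N2) + N1 + 1 ≤ v.val ∧ v.val < q * (N1 + N2) + N1 + (N2 - 1)))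
          (fun v => deg (graphG K N1 N2) v) 2
          (fun v hv => hdeg v (by simpa using hv))
        simpa [mul_comm] using this
    _ ≤ _ := by
        refine Finset.sum_le_sum_of_subset ?_
        intro v hv
        simp only [Finset.mem_filter, Finset.mem_univ, true_and] at hv ⊢
        exact hsub v hv

lemma odd_mem_image {K N1 N2 : ℕ} (hN1 : 3 ≤ N1) (hN2 : 3 ≤ N2) {q : ℕ} (hq : q < K) :
    2 * q + 1 ∈ Finset.univ.image (naturalLabel N1 N2 (n := K * (N1 + N2))) := by
  have hs : 0 < N1 + N2 := by omega
  have hlt : q * (N1 + N2) + N1 < K * (N1 + N2) := bound_lt hq (by omega)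
  rw [Finset.mem_image]
  refine ⟨⟨q * (N1 + N2) + N1, hlt⟩, Finset.mem_univ _, ?_⟩
  unfold naturalLabel
  simp only
  rw [blockIdx_eval N1 N2 q N1 hs (by omega), if_neg (by omega)]

lemma intraV {K N1 N2 : ℕ} :
    intraEdges (graphG K N1 N2) (naturalLabel N1 N2) = numEdges (graphG K N1 N2) := by
  unfold intraEdges numEdges
  congr 1
  refine Finset.filter_true_of_mem ?_
  intro e he
  obtain ⟨a, b, rfl, hb, hblk⟩ := edge_struct he
  rw [sameCluster_mk]
  exact hblk

lemma mem_offDiagPairs {p : Sym2 V} : p ∈ offDiagPairs V ↔ ¬ p.IsDiag := by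
  unfold offDiagPairs
  simp only [Finset.mem_filter, Finset.mem_univ, true_and]

lemma a11_add_a10 (c1 c2 : V → ℕ) : a11 c1 c2 + a10 c1 c2 = samePairCount c1 := by
  unfold a11 a10 samePairCount
  rw [← Finset.filter_filter, ← Finset.filter_filter]
  exact Finset.card_filter_add_card_filter_not _

lemma spV_ge {K N1 N2 : ℕ} (hK : 1 ≤ K) (hN1 : 3 ≤ N1) (hN2 : 3 ≤ N2) :
    K * ((N2 / 2) * (N2 - N2 / 2)) ≤
      samePairCount (naturalLabel N1 N2 (n := K * (N1 + N2))) := by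
  have hs : 0 < N1 + N2 := by omega
  have hn : 0 < K * (N1 + N2) := by positivity
  unfold samePairCount
  have key := Finset.card_le_card_of_injOn
    (f := fun z : ℕ × ℕ × ℕ => s(toF K N1 N2 hn (z.1 * (N1 + N2) + N1 + z.2.1),
      toF K N1 N2 hn (z.1 * (N1 + N2) + N1 + z.2.2)))
    (s := Finset.range K ×ˢ (Finset.range (N2 / 2) ×ˢ Finset.Ico (N2 / 2) N2))
    (t := (offDiagPairs (Fin (K * (N1 + N2)))).filter
      (fun p => sameCluster (naturalLabel N1 N2) p)) ?_ ?_
  · calc K * ((N2 / 2) * (N2 - N2 / 2))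
        = (Finset.range K ×ˢ (Finset.range (N2 / 2) ×ˢ Finset.Ico (N2 / 2) N2)).card := by
          rw [Finset.card_product, Finset.card_product, Finset.card_range,
            Finset.card_range, Nat.card_Ico]
      _ ≤ _ := key
  · rintro ⟨q, i, j⟩ hz
    simp only [Finset.mem_coe, Finset.mem_product, Finset.mem_range, Finset.mem_Ico] at hz
    obtain ⟨hq, hi, hj1, hj2⟩ := hz
    have hA : q * (N1 + N2) + N1 + i < K * (N1 + N2) := by
      have := bound_lt hq (show N1 + i < N1 + N2 by omega); omega
    have hB : q * (N1 + N2) + N1 + j < K * (N1 + N2) := by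
      have := bound_lt hq (show N1 + j < N1 + N2 by omega); omega
    have hvA := toF_val hn hA
    have hvB := toF_val hn hB
    simp only [Finset.mem_coe, Finset.mem_filter, mem_offDiagPairs]
    refine ⟨?_, ?_⟩
    · rw [Sym2.mk_isDiag_iff]
      intro hcon
      have := congrArg Fin.val hcon
      rw [hvA, hvB] at this
      omega
    · rw [sameCluster_mk]
      unfold naturalLabel
      rw [hvA, hvB, show q * (N1 + N2) + N1 + i = q * (N1 + N2) + (N1 + i) by ring,
        show q * (N1 + N2) + N1 + j = q * (N1 + N2) + (N1 + j) by ring,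
        blockIdx_eval N1 N2 q _ hs (by omega), blockIdx_eval N1 N2 q _ hs (by omega),
        if_neg (by omega), if_neg (by omega)]
  · rintro ⟨q, i, j⟩ hz ⟨q', i', j'⟩ hz' heq
    simp only [Finset.mem_coe, Finset.mem_product, Finset.mem_range, Finset.mem_Ico] at hz hz'
    obtain ⟨hq, hi, hj1, hj2⟩ := hz
    obtain ⟨hq', hi', hj1', hj2'⟩ := hz'
    have hA : q * (N1 + N2) + N1 + i < K * (N1 + N2) := by
      have := bound_lt hq (show N1 + i < N1 + N2 by omega); omega
    have hB : q * (N1 + N2) + N1 + j < K * (N1 + N2) := by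
      have := bound_lt hq (show N1 + j < N1 + N2 by omega); omega
    have hA' : q' * (N1 + N2) + N1 + i' < K * (N1 + N2) := by
      have := bound_lt hq' (show N1 + i' < N1 + N2 by omega); omega
    have hB' : q' * (N1 + N2) + N1 + j' < K * (N1 + N2) := by
      have := bound_lt hq' (show N1 + j' < N1 + N2 by omega); omega
    simp only at heq
    rw [Sym2.eq_iff] at heq
    rcases heq with ⟨h1, h2⟩ | ⟨h1, h2⟩
    · have e1 := congrArg Fin.val h1
      have e2 := congrArg Fin.val h2
      rw [toF_val hn hA, toF_val hn hA'] at e1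
      rw [toF_val hn hB, toF_val hn hB'] at e2
      have d1 := decomp_unique (show q * (N1 + N2) + (N1 + i) = q' * (N1 + N2) + (N1 + i') by
        omega) (by omega) (by omega)
      have d2 := decomp_unique (show q * (N1 + N2) + (N1 + j) = q' * (N1 + N2) + (N1 + j') by
        omega) (by omega) (by omega)
      simp only [Prod.mk.injEq]
      omega
    · have e1 := congrArg Fin.val h1
      have e2 := congrArg Fin.val h2
      rw [toF_val hn hA, toF_val hn hB'] at e1
      rw [toF_val hn hB, toF_val hn hA'] at e2
      have d1 := decomp_unique (show q * (N1 + N2) + (N1 + i) = q' * (N1 + N2) + (N1 + j') by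
        omega) (by omega) (by omega)
      omega

def pmin {n : ℕ} (p : Sym2 (Fin n)) : Fin n :=
  Sym2.lift ⟨fun a b => min a b, fun a b => min_comm a b⟩ p

def pmax {n : ℕ} (p : Sym2 (Fin n)) : Fin n :=
  Sym2.lift ⟨fun a b => max a b, fun a b => max_comm a b⟩ p

lemma pmin_mk {n : ℕ} (a b : Fin n) : pmin s(a, b) = min a b := rfl
lemma pmax_mk {n : ℕ} (a b : Fin n) : pmax s(a, b) = max a b := rfl

lemma mk_pmin_pmax {n : ℕ} (p : Sym2 (Fin n)) : s(pmin p, pmax p) = p := by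
  induction p using Sym2.ind with
  | _ a b =>
    rw [pmin_mk, pmax_mk]
    rcases le_total a b with h | h
    · rw [min_eq_left h, max_eq_right h]
    · rw [min_eq_right h, max_eq_left h]
      exact Sym2.eq_swap

lemma a11_le {n J : ℕ} (hJ : 1 ≤ J) (hL : 0 < n / J) (c1 : Fin n → ℕ) :
    a11 c1 (uLabel J) ≤ J * ((n / J) * (n / J)) + J * J := by
  have step1 : a11 c1 (uLabel J) ≤
      ((offDiagPairs (Fin n)).filter (fun p => sameCluster (uLabel J) p)).card := by
    refine Finset.card_le_card ?_
    intro p hp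
    rw [Finset.mem_filter] at hp ⊢
    exact ⟨hp.1, hp.2.2⟩
  have step2 : ((offDiagPairs (Fin n)).filter (fun p => sameCluster (uLabel J) p)).card ≤
      ((Finset.univ ×ˢ Finset.univ).filter (fun z : Fin n × Fin n =>
        z.1 < z.2 ∧ uLabel J z.1 = uLabel J z.2)).card := by
    refine Finset.card_le_card_of_injOn (fun p => (pmin p, pmax p)) ?_ ?_
    · intro p hp
      rw [Finset.mem_coe, Finset.mem_filter] at hp
      obtain ⟨hp1, hp2⟩ := hp
      rw [mem_offDiagPairs] at hp1
      induction p using Sym2.ind with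
      | _ a b =>
        have hab : a ≠ b := by
          intro hcon
          exact hp1 (by rw [Sym2.mk_isDiag_iff]; exact hcon)
        rw [sameCluster_mk] at hp2
        simp only [Finset.mem_coe, Finset.mem_filter, pmin_mk, pmax_mk]
        refine ⟨by simp, ?_, ?_⟩
        · rcases lt_or_gt_of_ne hab with h | h
          · rw [min_eq_left h.le, max_eq_right h.le]; exact h
          · rw [min_eq_right h.le, max_eq_left h.le]; exact h
        · rcases le_total a b with h | h
          · rw [min_eq_left h, max_eq_right h]; exact hp2
          · rw [min_eq_right h, max_eq_left h]; exact hp2.symm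
    · intro p hp p' hp' heq
      simp only [Prod.mk.injEq] at heq
      rw [← mk_pmin_pmax p, ← mk_pmin_pmax p', heq.1, heq.2]
  have step3 : ((Finset.univ ×ˢ Finset.univ).filter (fun z : Fin n × Fin n =>
        z.1 < z.2 ∧ uLabel J z.1 = uLabel J z.2)).card ≤
      ∑ k ∈ Finset.range (J + 1),
        ((Finset.univ.filter (fun v : Fin n => uLabel J v = k)) ×ˢ
          (Finset.univ.filter (fun v : Fin n => uLabel J v = k))).card := by
    refine le_trans (Finset.card_le_card ?_) (Finset.card_biUnion_le)
    intro z hz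
    rw [Finset.mem_filter] at hz
    rw [Finset.mem_biUnion]
    refine ⟨uLabel J z.1, Finset.mem_range.2 (Nat.lt_succ_of_le (uLabel_le z.1)), ?_⟩
    rw [Finset.mem_product, Finset.mem_filter, Finset.mem_filter]
    exact ⟨⟨Finset.mem_univ _, rfl⟩, Finset.mem_univ _, hz.2.2.symm⟩
  have step4 : ∑ k ∈ Finset.range (J + 1),
        ((Finset.univ.filter (fun v : Fin n => uLabel J v = k)) ×ˢ
          (Finset.univ.filter (fun v : Fin n => uLabel J v = k))).card ≤
      J * ((n / J) * (n / J)) + J * J := by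
    rw [Finset.sum_range_succ]
    have hlast : ((Finset.univ.filter (fun v : Fin n => uLabel J v = J)) ×ˢ
        (Finset.univ.filter (fun v : Fin n => uLabel J v = J))).card ≤ J * J := by
      rw [Finset.card_product]
      exact Nat.mul_le_mul (fiberU_last_le hJ hL) (fiberU_last_le hJ hL)
    have hmain : ∑ k ∈ Finset.range J,
        ((Finset.univ.filter (fun v : Fin n => uLabel J v = k)) ×ˢ
          (Finset.univ.filter (fun v : Fin n => uLabel J v = k))).card ≤
        J * ((n / J) * (n / J)) := by
      have := Finset.sum_le_card_nsmul (Finset.range J)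
        (fun k => ((Finset.univ.filter (fun v : Fin n => uLabel J v = k)) ×ˢ
          (Finset.univ.filter (fun v : Fin n => uLabel J v = k))).card)
        ((n / J) * (n / J))
        (fun k hk => by
          rw [Finset.card_product]
          exact Nat.mul_le_mul (fiberU_le hJ hL (Finset.mem_range.1 hk))
            (fiberU_le hJ hL (Finset.mem_range.1 hk)))
      simpa [mul_comm] using this
    omega
  omega

lemma numEdges_pos {K N1 N2 : ℕ} (hK : 1 ≤ K) (hN1 : 3 ≤ N1) (hN2 : 3 ≤ N2) :
    0 < numEdges (graphG K N1 N2) := by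
  have := le_numEdges hK hN1 hN2
  have : 1 * (N1 + N2 - 2) ≤ K * (N1 + N2 - 2) :=
    Nat.mul_le_mul_right _ hK
  omega

lemma Q0_U_le {K N1 N2 J : ℕ} (hK : 1 ≤ K) (hN1 : 3 ≤ N1) (hN2 : 3 ≤ N2)
    (hJ : 1 ≤ J) (hJ2 : J * J ≤ K * (N1 + N2)) :
    Q0 (graphG K N1 N2) (uLabel J) ≤
      (J : ℝ) * (((K * (N1 + N2) / J : ℕ) : ℝ) / (numEdges (graphG K N1 N2) : ℝ)) ^ 2 +
        ((J : ℝ) / (numEdges (graphG K N1 N2) : ℝ)) ^ 2 := by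
  have hmpos : 0 < numEdges (graphG K N1 N2) := numEdges_pos hK hN1 hN2
  have hmR : (0 : ℝ) < (numEdges (graphG K N1 N2) : ℝ) := by exact_mod_cast hmpos
  have hL : 0 < K * (N1 + N2) / J := by
    have : J ≤ K * (N1 + N2) / J := (Nat.le_div_iff_mul_le (by omega)).2 hJ2
    omega
  unfold Q0
  have himg : Finset.univ.image (uLabel J (n := K * (N1 + N2))) ⊆ Finset.range (J + 1) := by
    intro k hk
    rw [Finset.mem_image] at hk
    obtain ⟨v, -, rfl⟩ := hk
    exact Finset.mem_range.2 (Nat.lt_succ_of_le (uLabel_le v))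
  have hstep1 : ∑ k ∈ Finset.univ.image (uLabel J (n := K * (N1 + N2))),
      ((clusterDeg (graphG K N1 N2) (uLabel J) k : ℝ) /
        (2 * (numEdges (graphG K N1 N2) : ℝ))) ^ 2 ≤
      ∑ k ∈ Finset.range (J + 1),
      ((clusterDeg (graphG K N1 N2) (uLabel J) k : ℝ) /
        (2 * (numEdges (graphG K N1 N2) : ℝ))) ^ 2 :=
    Finset.sum_le_sum_of_subset_of_nonneg himg (fun k _ _ => sq_nonneg _)
  refine hstep1.trans ?_
  rw [Finset.sum_range_succ]
  have hterm : ∀ k, k < J →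
      ((clusterDeg (graphG K N1 N2) (uLabel J) k : ℝ) /
        (2 * (numEdges (graphG K N1 N2) : ℝ))) ^ 2 ≤
      (((K * (N1 + N2) / J : ℕ) : ℝ) / (numEdges (graphG K N1 N2) : ℝ)) ^ 2 := by
    intro k hk
    have hcd : clusterDeg (graphG K N1 N2) (uLabel J) k ≤ 2 * (K * (N1 + N2) / J) :=
      (clusterDeg_le_two_mul _ k).trans (by
        have := fiberU_le (n := K * (N1 + N2)) hJ hL hk
        omega)
    have h1 : ((clusterDeg (graphG K N1 N2) (uLabel J) k : ℝ) /
        (2 * (numEdges (graphG K N1 N2) : ℝ))) ≤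
        (((K * (N1 + N2) / J : ℕ) : ℝ) / (numEdges (graphG K N1 N2) : ℝ)) := by
      rw [div_le_div_iff₀ (by positivity) hmR]
      have : (clusterDeg (graphG K N1 N2) (uLabel J) k : ℝ) ≤
          2 * ((K * (N1 + N2) / J : ℕ) : ℝ) := by exact_mod_cast hcd
      nlinarith
    exact pow_le_pow_left₀ (by positivity) h1 2
  have hlast : ((clusterDeg (graphG K N1 N2) (uLabel J) J : ℝ) /
        (2 * (numEdges (graphG K N1 N2) : ℝ))) ^ 2 ≤
      ((J : ℝ) / (numEdges (graphG K N1 N2) : ℝ)) ^ 2 := by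
    have hcd : clusterDeg (graphG K N1 N2) (uLabel J) J ≤ 2 * J :=
      (clusterDeg_le_two_mul _ J).trans (by
        have := fiberU_last_le (n := K * (N1 + N2)) hJ hL
        omega)
    have h1 : ((clusterDeg (graphG K N1 N2) (uLabel J) J : ℝ) /
        (2 * (numEdges (graphG K N1 N2) : ℝ))) ≤
        ((J : ℝ) / (numEdges (graphG K N1 N2) : ℝ)) := by
      rw [div_le_div_iff₀ (by positivity) hmR]
      have : (clusterDeg (graphG K N1 N2) (uLabel J) J : ℝ) ≤ 2 * (J : ℝ) := by
        exact_mod_cast hcd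
      nlinarith
    exact pow_le_pow_left₀ (by positivity) h1 2
  have hsum : ∑ k ∈ Finset.range J,
      ((clusterDeg (graphG K N1 N2) (uLabel J) k : ℝ) /
        (2 * (numEdges (graphG K N1 N2) : ℝ))) ^ 2 ≤
      (J : ℝ) * (((K * (N1 + N2) / J : ℕ) : ℝ) / (numEdges (graphG K N1 N2) : ℝ)) ^ 2 := by
    have := Finset.sum_le_card_nsmul (Finset.range J)
      (fun k => ((clusterDeg (graphG K N1 N2) (uLabel J) k : ℝ) /
        (2 * (numEdges (graphG K N1 N2) : ℝ))) ^ 2)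
      ((((K * (N1 + N2) / J : ℕ) : ℝ) / (numEdges (graphG K N1 N2) : ℝ)) ^ 2)
      (fun k hk => hterm k (Finset.mem_range.1 hk))
    simpa [nsmul_eq_mul] using this
  linarith

lemma Q0_V_ge {K N1 N2 : ℕ} (hK : 1 ≤ K) (hN1 : 3 ≤ N1) (hN2 : 3 ≤ N2) :
    (K : ℝ) * (((N2 : ℝ) - 2) / ((K * (N1 + N2) : ℕ) : ℝ)) ^ 2 ≤
      Q0 (graphG K N1 N2) (naturalLabel N1 N2) := by
  have hmpos : 0 < numEdges (graphG K N1 N2) := numEdges_pos hK hN1 hN2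
  have hmR : (0 : ℝ) < (numEdges (graphG K N1 N2) : ℝ) := by exact_mod_cast hmpos
  have hnR : (0 : ℝ) < ((K * (N1 + N2) : ℕ) : ℝ) := by
    have : 0 < K * (N1 + N2) := by positivity
    exact_mod_cast this
  have hmn : numEdges (graphG K N1 N2) ≤ K * (N1 + N2) := numEdges_le
  unfold Q0
  have hsub : (Finset.range K).image (fun q => 2 * q + 1) ⊆
      Finset.univ.image (naturalLabel N1 N2 (n := K * (N1 + N2))) := by
    intro k hk
    rw [Finset.mem_image] at hk
    obtain ⟨q, hq, rfl⟩ := hk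
    exact odd_mem_image hN1 hN2 (Finset.mem_range.1 hq)
  have hterm : ∀ k ∈ (Finset.range K).image (fun q => 2 * q + 1),
      (((N2 : ℝ) - 2) / ((K * (N1 + N2) : ℕ) : ℝ)) ^ 2 ≤
      ((clusterDeg (graphG K N1 N2) (naturalLabel N1 N2) k : ℝ) /
        (2 * (numEdges (graphG K N1 N2) : ℝ))) ^ 2 := by
    intro k hk
    rw [Finset.mem_image] at hk
    obtain ⟨q, hq, rfl⟩ := hk
    have hcd : 2 * (N2 - 2) ≤ clusterDeg (graphG K N1 N2) (naturalLabel N1 N2) (2 * q + 1) :=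
      clusterDeg_odd_ge hN1 hN2 (Finset.mem_range.1 hq)
    have h1 : (((N2 : ℝ) - 2) / ((K * (N1 + N2) : ℕ) : ℝ)) ≤
        ((clusterDeg (graphG K N1 N2) (naturalLabel N1 N2) (2 * q + 1) : ℝ) /
          (2 * (numEdges (graphG K N1 N2) : ℝ))) := by
      rw [div_le_div_iff₀ hnR (by positivity)]
      have hc : (2 : ℝ) * ((N2 : ℝ) - 2) ≤
          (clusterDeg (graphG K N1 N2) (naturalLabel N1 N2) (2 * q + 1) : ℝ) := by
        have : ((2 * (N2 - 2) : ℕ) : ℝ) ≤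
            (clusterDeg (graphG K N1 N2) (naturalLabel N1 N2) (2 * q + 1) : ℝ) := by
          exact_mod_cast hcd
        push_cast at this
        rw [Nat.cast_sub (by omega)] at this
        push_cast at this
        linarith
      have hmn' : (numEdges (graphG K N1 N2) : ℝ) ≤ ((K * (N1 + N2) : ℕ) : ℝ) := by
        exact_mod_cast hmn
      nlinarith
    have h0 : (0 : ℝ) ≤ (((N2 : ℝ) - 2) / ((K * (N1 + N2) : ℕ) : ℝ)) := by
      have : (0:ℝ) ≤ (N2 : ℝ) - 2 := by
        have : (3:ℝ) ≤ (N2 : ℝ) := by exact_mod_cast hN2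
        linarith
      positivity
    exact pow_le_pow_left₀ h0 h1 2
  have hinj : Set.InjOn (fun q => 2 * q + 1) (Finset.range K) := by
    intro a _ b _ h
    simp only at h
    omega
  calc (K : ℝ) * (((N2 : ℝ) - 2) / ((K * (N1 + N2) : ℕ) : ℝ)) ^ 2
      = ∑ _k ∈ (Finset.range K).image (fun q => 2 * q + 1),
          (((N2 : ℝ) - 2) / ((K * (N1 + N2) : ℕ) : ℝ)) ^ 2 := by
        rw [Finset.sum_const, Finset.card_image_of_injOn hinj, Finset.card_range,
          nsmul_eq_mul]
    _ ≤ ∑ k ∈ (Finset.range K).image (fun q => 2 * q + 1),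
          ((clusterDeg (graphG K N1 N2) (naturalLabel N1 N2) k : ℝ) /
            (2 * (numEdges (graphG K N1 N2) : ℝ))) ^ 2 := Finset.sum_le_sum hterm
    _ ≤ _ := Finset.sum_le_sum_of_subset_of_nonneg hsub (fun k _ _ => sq_nonneg _)

end BadComm

open BadComm


lemma arith1 {x j k ν ε : ℝ} (hx0 : 0 ≤ x) (hj : 1 ≤ j) (hk : 1 ≤ k) (hν : 19 ≤ ν)
    (hε : 0 < ε) (hxj : x * j ≤ k * (3 + ν)) (hJε : 128 * k ≤ ε * j) :
    32 * (j * (x * x)) ≤ ε * k * ν ^ 2 := by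
  have hk0 : (0:ℝ) ≤ k := by linarith
  have hj0 : (0:ℝ) ≤ j := by linarith
  have s1 : (x * j) ^ 2 ≤ (k * (3 + ν)) ^ 2 :=
    pow_le_pow_left₀ (mul_nonneg hx0 hj0) hxj 2
  have s2a : k * (3 + ν) ≤ 2 * k * ν := by nlinarith
  have s2 : (k * (3 + ν)) ^ 2 ≤ (2 * k * ν) ^ 2 :=
    pow_le_pow_left₀ (mul_nonneg hk0 (by linarith)) s2a 2
  have hint := mul_nonneg (sub_nonneg.2 hJε) (mul_nonneg hk0 (sq_nonneg ν))
  have hmul : 32 * (j * (x * x)) * j ≤ ε * k * ν ^ 2 * j := by nlinarith [s1, s2, hint]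
  exact le_of_mul_le_mul_right hmul (by linarith)

lemma arith2 {j k ν ε : ℝ} (hk : 1 ≤ k) (hε2 : ε ≤ 1/2) (hε : 0 < ε) (hν0 : 0 ≤ ν)
    (hj : 0 ≤ j) (h8 : 8 * j ≤ ε * ν) : 128 * (j * j) ≤ ε * k * ν ^ 2 := by
  have u1 : (8 * j) * (8 * j) ≤ (ε * ν) * (ε * ν) :=
    mul_self_le_mul_self (by linarith) h8
  have u2 := mul_le_mul_of_nonneg_right hε2 (show (0:ℝ) ≤ ε * ν ^ 2 by positivity)
  have u3 := mul_le_mul_of_nonneg_right hk (show (0:ℝ) ≤ ε * ν ^ 2 by positivity)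
  nlinarith [u1, u2, u3]

lemma arith3 {h ν : ℝ} (h1 : 2 * h ≤ ν) (h2 : ν ≤ 2 * h + 1) (hν : 19 ≤ ν) :
    ν ^ 2 / 8 ≤ h * (ν - h) := by
  nlinarith [mul_nonneg (by linarith : (0:ℝ) ≤ 2 * h + 1 - ν)
    (by linarith : (0:ℝ) ≤ ν - 2 * h)]

set_option maxHeartbeats 2000000 in
/-- Theorem 3 of the paper: for every `K ≥ 1` and `ε ∈ (0, 1/(2K))`
there are `N₁, N₂ ≥ 3` and `1 ≤ J ≤ K(N₁+N₂)` with
`Q_N(𝐕) < 1 − 1/(2K) < 1 − ε < Q_N(𝐔)` and `S(𝐕,𝐔) < ε`. -/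
theorem statement9 (K : ℕ) (hK : 1 ≤ K) (ε : ℝ) (hε0 : 0 < ε) (hε1 : ε < 1 / (2 * (K : ℝ))) :
    ∃ N1 N2 J : ℕ, 3 ≤ N1 ∧ 3 ≤ N2 ∧ 1 ≤ J ∧ J ≤ K * (N1 + N2) ∧
      QN (graphG K N1 N2) (naturalLabel N1 N2) < 1 - 1 / (2 * (K : ℝ)) ∧
      (1 : ℝ) - 1 / (2 * (K : ℝ)) < 1 - ε ∧
      1 - ε < QN (graphG K N1 N2) (uLabel J) ∧
      jaccard (naturalLabel N1 N2 : Fin (K * (N1 + N2)) → ℕ) (uLabel J) < ε := by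
  classical
  -- real versions of constants
  have hKR : (1:ℝ) ≤ (K:ℝ) := by exact_mod_cast hK
  have hKR0 : (0:ℝ) < (K:ℝ) := by linarith
  have hεhalf : ε ≤ 1/2 := by
    have h2 : 1/(2*(K:ℝ)) ≤ 1/2 := by
      apply one_div_le_one_div_of_le <;> linarith
    linarith
  -- choose parameters
  set J : ℕ := ⌈(128*(K:ℝ))/ε⌉₊ with hJdef
  have hJR : (128*(K:ℝ))/ε ≤ (J:ℝ) := Nat.le_ceil _
  have hJ1 : 1 ≤ J := by
    rw [hJdef]
    exact Nat.one_le_iff_ne_zero.2 (by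
      intro h
      have := Nat.ceil_eq_zero.1 h
      have : (0:ℝ) < (128*(K:ℝ))/ε := by positivity
      linarith)
  have hj1R : (1:ℝ) ≤ (J:ℝ) := by exact_mod_cast hJ1
  set N2 : ℕ := 19 + J*J + ⌈(8*(J:ℝ))/ε⌉₊ with hN2def
  have hN2a : 19 ≤ N2 := by omega
  have hN2b : 3 ≤ N2 := by omega
  have hν19 : (19:ℝ) ≤ (N2:ℝ) := by exact_mod_cast hN2a
  have hN2R : (8*(J:ℝ))/ε ≤ (N2:ℝ) := by
    refine le_trans (Nat.le_ceil _) ?_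
    exact_mod_cast (by omega : (⌈(8*(J:ℝ))/ε⌉₊ : ℕ) ≤ N2)
  have hν8 : 8*(J:ℝ) ≤ ε*(N2:ℝ) := by
    have := (div_le_iff₀ hε0).1 hN2R
    linarith
  have hJε : 128*(K:ℝ) ≤ ε*(J:ℝ) := by
    have := (div_le_iff₀ hε0).1 hJR
    linarith
  -- basic nat facts
  have hJn : J * J ≤ K * (3 + N2) := by
    have h1 : J * J ≤ N2 := by omega
    have h2 : N2 ≤ 1 * (3 + N2) := by omega
    have h3 : 1 * (3 + N2) ≤ K * (3 + N2) := Nat.mul_le_mul_right _ hK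
    omega
  have hJle : J ≤ K * (3 + N2) := by
    have : J * 1 ≤ J * J := Nat.mul_le_mul_left _ hJ1
    omega
  have hmpos : 0 < numEdges (graphG K 3 N2) := numEdges_pos hK (by omega) hN2b
  have hmR : (0:ℝ) < (numEdges (graphG K 3 N2) : ℝ) := by exact_mod_cast hmpos
  have hm1 : K * (N2 + 1) ≤ numEdges (graphG K 3 N2) := by
    have := le_numEdges (K := K) (N1 := 3) (N2 := N2) hK (by omega) hN2b
    have he : 3 + N2 - 2 = N2 + 1 := by omega
    rwa [he] at this
  have hm2 : numEdges (graphG K 3 N2) ≤ K * (3 + N2) := numEdges_le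
  have hm1R : (K:ℝ) * ((N2:ℝ) + 1) ≤ (numEdges (graphG K 3 N2) : ℝ) := by
    exact_mod_cast hm1
  have hm2R : (numEdges (graphG K 3 N2) : ℝ) ≤ (K:ℝ) * (3 + (N2:ℝ)) := by
    have : ((numEdges (graphG K 3 N2) : ℕ) : ℝ) ≤ ((K * (3 + N2) : ℕ) : ℝ) := by
      exact_mod_cast hm2
    push_cast at this
    linarith
  have hmν : (N2:ℝ) ≤ (numEdges (graphG K 3 N2) : ℝ) := by nlinarith
  have hL0 : 0 < K * (3 + N2) / J := by
    have : J ≤ K * (3 + N2) / J := (Nat.le_div_iff_mul_le (by omega)).2 hJn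
    omega
  have hLn : ((K * (3 + N2) / J : ℕ) : ℝ) * (J:ℝ) ≤ (K:ℝ) * (3 + (N2:ℝ)) := by
    have h1 : (K * (3 + N2) / J) * J ≤ K * (3 + N2) := Nat.div_mul_le_self _ _
    have h2 : (((K * (3 + N2) / J) * J : ℕ) : ℝ) ≤ ((K * (3 + N2) : ℕ) : ℝ) := by
      exact_mod_cast h1
    push_cast at h2
    linarith
  have hLR0 : (0:ℝ) ≤ ((K * (3 + N2) / J : ℕ) : ℝ) := by positivity
  refine ⟨3, N2, J, le_refl 3, hN2b, hJ1, hJle, ?_, ?_, ?_, ?_⟩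
  -- Part A : QN V < 1 - 1/(2K)
  · have hQf : Qf (graphG K 3 N2) (naturalLabel 3 N2) = 1 := by
      unfold Qf
      rw [intraV]
      exact div_self (ne_of_gt hmR)
    have hQ0 := Q0_V_ge (K := K) (N1 := 3) (N2 := N2) hK (by omega) hN2b
    have hnR : ((K * (3 + N2) : ℕ) : ℝ) = (K:ℝ) * (3 + (N2:ℝ)) := by push_cast; ring
    have key : 1/(2*(K:ℝ)) < (K:ℝ) * (((N2:ℝ) - 2) / ((K * (3 + N2) : ℕ) : ℝ)) ^ 2 := by
      rw [hnR]
      have hrw : (K:ℝ) * (((N2:ℝ) - 2) / ((K:ℝ) * (3 + (N2:ℝ)))) ^ 2 =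
          ((N2:ℝ) - 2)^2 / ((K:ℝ) * (3 + (N2:ℝ))^2) := by
        field_simp
      rw [hrw, div_lt_div_iff₀ (by positivity) (by positivity)]
      nlinarith
    unfold QN
    rw [hQf]
    linarith
  -- Part B : 1 - 1/(2K) < 1 - ε
  · linarith
  -- Part C : 1 - ε < QN U
  · have hQ0U := Q0_U_le (K := K) (N1 := 3) (N2 := N2) (J := J) hK (by omega) hN2b hJ1 hJn
    have hsplit : intraEdges (graphG K 3 N2) (uLabel J) +
        extraEdges (graphG K 3 N2) (uLabel J) = numEdges (graphG K 3 N2) := by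
      unfold intraEdges extraEdges numEdges
      exact Finset.card_filter_add_card_filter_not _
    have hextra : extraEdges (graphG K 3 N2) (uLabel J) ≤ J := by
      unfold extraEdges
      exact extra_le_cut hJ1 hJn
    have hintraR : (numEdges (graphG K 3 N2) : ℝ) - (J:ℝ) ≤
        (intraEdges (graphG K 3 N2) (uLabel J) : ℝ) := by
      have : numEdges (graphG K 3 N2) ≤ intraEdges (graphG K 3 N2) (uLabel J) + J := by omega
      have h2 : ((numEdges (graphG K 3 N2) : ℕ) : ℝ) ≤
          ((intraEdges (graphG K 3 N2) (uLabel J) + J : ℕ) : ℝ) := by exact_mod_cast this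
      push_cast at h2
      linarith
    have hQfU : 1 - (J:ℝ)/(numEdges (graphG K 3 N2) : ℝ) ≤
        Qf (graphG K 3 N2) (uLabel J) := by
      unfold Qf
      rw [sub_div' (ne_of_gt hmR)] at *
      · rw [div_le_div_iff₀ hmR hmR] at *
        · nlinarith
    set LR : ℝ := ((K * (3 + N2) / J : ℕ) : ℝ) with hLRdef
    set mR : ℝ := (numEdges (graphG K 3 N2) : ℝ) with hmRdef
    have b1 : (J:ℝ)/mR ≤ ε/8 := by
      rw [div_le_iff₀ hmR]
      nlinarith
    have hLm : LR * (J:ℝ) ≤ 2 * mR := by nlinarith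
    have b2 : (J:ℝ) * (LR/mR)^2 ≤ ε/4 := by
      have hs : (LR * (J:ℝ))^2 ≤ (2*mR)^2 :=
        pow_le_pow_left₀ (by positivity) hLm 2
      rw [div_pow, ← mul_div_assoc, div_le_iff₀ (by positivity)]
      have hcert : ((J:ℝ) * LR^2) * ((J:ℝ) * (J:ℝ)) ≤ 4 * mR^2 * (J:ℝ) := by nlinarith
      nlinarith [mul_nonneg (mul_nonneg hε0.le (by positivity : (0:ℝ) ≤ (J:ℝ))) (sq_nonneg mR),
        mul_nonneg (sub_nonneg.2 hJε) (sq_nonneg mR)]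
    have b3 : ((J:ℝ)/mR)^2 ≤ ε/4 := by
      have h0 : (0:ℝ) ≤ (J:ℝ)/mR := by positivity
      nlinarith
    unfold QN
    have : Q0 (graphG K 3 N2) (uLabel J) ≤ ε/4 + ε/4 := le_trans hQ0U (by linarith)
    have hQfU' := hQfU
    linarith
  -- Part D : jaccard < ε
  · have ha11 := a11_le (n := K * (3 + N2)) hJ1 hL0 (naturalLabel 3 N2)
    have hspV := spV_ge (K := K) (N1 := 3) (N2 := N2) hK (by omega) hN2b
    have hsplit2 := a11_add_a10 (naturalLabel 3 N2 (n := K * (3 + N2))) (uLabel J)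
    have hsppos : 0 < samePairCount (naturalLabel 3 N2 (n := K * (3 + N2))) := by
      have h9 : 9 ≤ N2 / 2 := by omega
      have h9' : 9 ≤ N2 - N2 / 2 := by omega
      have : 1 * (1 * 1) ≤ K * ((N2/2) * (N2 - N2/2)) :=
        Nat.mul_le_mul hK (Nat.mul_le_mul (by omega) (by omega))
      omega
    have hspR0 : (0:ℝ) < (samePairCount (naturalLabel 3 N2 (n := K * (3 + N2))) : ℝ) := by
      exact_mod_cast hsppos
    have hdenom : (a10 (naturalLabel 3 N2 (n := K * (3 + N2))) (uLabel J) : ℝ) +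
        (a01 (naturalLabel 3 N2 (n := K * (3 + N2))) (uLabel J) : ℝ) +
        (a11 (naturalLabel 3 N2 (n := K * (3 + N2))) (uLabel J) : ℝ) =
        (a01 (naturalLabel 3 N2 (n := K * (3 + N2))) (uLabel J) : ℝ) +
        (samePairCount (naturalLabel 3 N2 (n := K * (3 + N2))) : ℝ) := by
      have h2 : ((a11 (naturalLabel 3 N2 (n := K * (3 + N2))) (uLabel J) +
          a10 (naturalLabel 3 N2 (n := K * (3 + N2))) (uLabel J) : ℕ) : ℝ) =
          (samePairCount (naturalLabel 3 N2 (n := K * (3 + N2))) : ℝ) := by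
        exact_mod_cast hsplit2
      push_cast at h2
      linarith
    have hja : jaccard (naturalLabel 3 N2 (n := K * (3 + N2))) (uLabel J) ≤
        (a11 (naturalLabel 3 N2 (n := K * (3 + N2))) (uLabel J) : ℝ) /
        (samePairCount (naturalLabel 3 N2 (n := K * (3 + N2))) : ℝ) := by
      unfold jaccard
      rw [hdenom]
      have ha01 : (0:ℝ) ≤ (a01 (naturalLabel 3 N2 (n := K * (3 + N2))) (uLabel J) : ℝ) := by
        positivity
      apply div_le_div_of_nonneg_left (by positivity) hspR0
      linarith
    refine lt_of_le_of_lt hja ?_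
    rw [div_lt_iff₀ hspR0]
    have ha11R : (a11 (naturalLabel 3 N2 (n := K * (3 + N2))) (uLabel J) : ℝ) ≤
        (J:ℝ) * (((K * (3 + N2) / J : ℕ) : ℝ) * ((K * (3 + N2) / J : ℕ) : ℝ)) +
          (J:ℝ) * (J:ℝ) := by
      have h2 : ((a11 (naturalLabel 3 N2 (n := K * (3 + N2))) (uLabel J) : ℕ) : ℝ) ≤
          ((J * ((K * (3 + N2) / J) * (K * (3 + N2) / J)) + J * J : ℕ) : ℝ) := by
        exact_mod_cast ha11
      push_cast at h2
      linarith
    have hspR : (K:ℝ) * (((N2 / 2 : ℕ) : ℝ) * ((N2:ℝ) - ((N2 / 2 : ℕ) : ℝ))) ≤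
        (samePairCount (naturalLabel 3 N2 (n := K * (3 + N2))) : ℝ) := by
      have h2 : ((K * ((N2/2) * (N2 - N2/2)) : ℕ) : ℝ) ≤
          (samePairCount (naturalLabel 3 N2 (n := K * (3 + N2))) : ℝ) := by
        exact_mod_cast hspV
      rw [Nat.cast_mul, Nat.cast_mul, Nat.cast_sub (Nat.div_le_self _ _)] at h2
      exact h2
    have hh1 : 2 * ((N2 / 2 : ℕ) : ℝ) ≤ (N2:ℝ) := by
      have h : 2 * (N2/2) ≤ N2 := by omega
      exact_mod_cast h
    have hh2 : (N2:ℝ) ≤ 2 * ((N2 / 2 : ℕ) : ℝ) + 1 := by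
      have h : N2 ≤ 2 * (N2/2) + 1 := by omega
      exact_mod_cast h
    have hh0 : (0:ℝ) ≤ ((N2 / 2 : ℕ) : ℝ) := by positivity
    have t1 : 32 * ((J:ℝ) * (((K * (3 + N2) / J : ℕ) : ℝ) * ((K * (3 + N2) / J : ℕ) : ℝ))) ≤
        ε * (K:ℝ) * (N2:ℝ)^2 :=
      arith1 hLR0 hj1R hKR hν19 hε0 hLn hJε
    have t2 : 128 * ((J:ℝ) * (J:ℝ)) ≤ ε * (K:ℝ) * (N2:ℝ)^2 :=
      arith2 hKR hεhalf hε0 (by positivity) (by positivity) hν8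
    have t3 : ε * (K:ℝ) * (N2:ℝ)^2 / 8 ≤
        ε * ((K:ℝ) * (((N2 / 2 : ℕ) : ℝ) * ((N2:ℝ) - ((N2 / 2 : ℕ) : ℝ)))) := by
      have hq : (N2:ℝ)^2 / 8 ≤ ((N2 / 2 : ℕ) : ℝ) * ((N2:ℝ) - ((N2 / 2 : ℕ) : ℝ)) :=
        arith3 hh1 hh2 hν19
      have h3 := mul_le_mul_of_nonneg_left hq (mul_nonneg hε0.le hKR0.le)
      calc ε * (K:ℝ) * (N2:ℝ)^2 / 8 = (ε * (K:ℝ)) * ((N2:ℝ)^2/8) := by ring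
        _ ≤ (ε * (K:ℝ)) * (((N2 / 2 : ℕ) : ℝ) * ((N2:ℝ) - ((N2 / 2 : ℕ) : ℝ))) := h3
        _ = ε * ((K:ℝ) * (((N2 / 2 : ℕ) : ℝ) * ((N2:ℝ) - ((N2 / 2 : ℕ) : ℝ)))) := by ring
    have hpos : (0:ℝ) < ε * (K:ℝ) * (N2:ℝ)^2 := by positivity
    calc (a11 (naturalLabel 3 N2 (n := K * (3 + N2))) (uLabel J) : ℝ)
        ≤ (J:ℝ) * (((K * (3 + N2) / J : ℕ) : ℝ) * ((K * (3 + N2) / J : ℕ) : ℝ)) +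
            (J:ℝ) * (J:ℝ) := ha11R
      _ < ε * (K:ℝ) * (N2:ℝ)^2 / 8 := by linarith
      _ ≤ ε * ((K:ℝ) * (((N2 / 2 : ℕ) : ℝ) * ((N2:ℝ) - ((N2 / 2 : ℕ) : ℝ)))) := t3
      _ ≤ ε * (samePairCount (naturalLabel 3 N2 (n := K * (3 + N2))) : ℝ) :=
          mul_le_mul_of_nonneg_left hspR hε0.le
end
end

section
/- Fix an integer K ≥ 1 and for each integer x ≥ 1 set N₁ = 3, J = xK and N₂ = x²K. Then the Jaccard similarity between 𝐔_{K,3,x²K,xK} and 𝐕_{K,3,x²K} satisfies 0 ≤ S(𝐔_{K,3,x²K,xK}, 𝐕_{K,3,x²K}) < (4K³x³ + 4K²x²)/((1/2)K³x⁴ − (1/2)K²x² + 3K), and consequently S(𝐔_{K,3,x²K,xK}, 𝐕_{K,3,x²K}) → 0 as x → ∞. -/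
open scoped Classical

noncomputable section

namespace BadComm

variable {V : Type*} [Fintype V]

section Aux

set_option linter.unusedSectionVars false

lemma sameCluster_iff' (c : V → ℕ) (u v : V) : sameCluster c s(u, v) ↔ c u = c v := by
  constructor
  · intro h; exact h u (by simp) v (by simp)
  · intro h a ha b hb
    rw [Sym2.mem_iff] at ha hb
    rcases ha with rfl|rfl <;> rcases hb with rfl|rfl <;> first | rfl | exact h | exact h.symm

lemma filter_same_eq_biUnion' (c : V → ℕ) :
    (offDiagPairs V).filter (fun p => sameCluster c p) =
      (Finset.univ.image c).biUnion
        (fun k => ((Finset.univ.filter (fun v => c v = k)).offDiag.image (Function.uncurry Sym2.mk))) := by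
  apply Finset.Subset.antisymm
  · intro p hp
    rw [Finset.mem_filter, offDiagPairs, Finset.mem_filter] at hp
    obtain ⟨⟨-, hd⟩, hsc⟩ := hp
    induction p using Sym2.ind with
    | _ u v =>
      have hne : u ≠ v := by simpa using hd
      have h := (sameCluster_iff' c u v).1 hsc
      refine Finset.mem_biUnion.2 ⟨c u, Finset.mem_image.2 ⟨u, Finset.mem_univ u, rfl⟩,
        Finset.mem_image.2 ⟨(u, v), Finset.mem_offDiag.2 ⟨?_, ?_, hne⟩, rfl⟩⟩
      · simp
      · simp [h.symm]
  · intro p hp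
    rw [Finset.mem_biUnion] at hp
    obtain ⟨k, -, hp⟩ := hp
    obtain ⟨⟨a, b⟩, hab, rfl⟩ := Finset.mem_image.1 hp
    rw [Finset.mem_offDiag] at hab
    obtain ⟨ha, hb, hne⟩ := hab
    simp only [Finset.mem_filter, Finset.mem_univ] at ha hb
    rw [Finset.mem_filter, offDiagPairs, Finset.mem_filter]
    refine ⟨⟨Finset.mem_univ _, by simpa using hne⟩,
      (sameCluster_iff' c a b).2 (by rw [ha.2, hb.2])⟩

lemma samePairCount_eq' (c : V → ℕ) :
    samePairCount c = ∑ k ∈ Finset.univ.image c,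
      ((Finset.univ.filter (fun v => c v = k)).card.choose 2) := by
  rw [samePairCount, filter_same_eq_biUnion', Finset.card_biUnion]
  · exact Finset.sum_congr rfl fun k _ => Sym2.card_image_offDiag _
  · intro k₁ _ k₂ _ hne
    rw [Function.onFun, Finset.disjoint_left]
    rintro p hp1 hp2
    obtain ⟨⟨a, b⟩, hab, rfl⟩ := Finset.mem_image.1 hp1
    obtain ⟨⟨a', b'⟩, hab', he⟩ := Finset.mem_image.1 hp2
    rw [Finset.mem_offDiag] at hab hab'
    have hm : a ∈ (s(a', b') : Sym2 V) := by rw [show (s(a', b') : Sym2 V) = s(a, b) from he]; simp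
    rw [Sym2.mem_iff] at hm
    have h1 : c a = k₁ := (Finset.mem_filter.1 hab.1).2
    apply hne
    rcases hm with rfl|rfl
    · exact h1 ▸ (Finset.mem_filter.1 hab'.1).2.symm ▸ rfl
    · rw [← h1, (Finset.mem_filter.1 hab'.2.1).2]

lemma a11_le' (c1 c2 : V → ℕ) : a11 c1 c2 ≤ samePairCount c1 := by
  apply Finset.card_le_card
  intro p hp
  rw [Finset.mem_filter] at hp ⊢
  exact ⟨hp.1, hp.2.1⟩

lemma a01_add_a11' (c1 c2 : V → ℕ) : a01 c1 c2 + a11 c1 c2 = samePairCount c2 := by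
  have h1 : (offDiagPairs V).filter (fun p => ¬sameCluster c1 p ∧ sameCluster c2 p)
      = ((offDiagPairs V).filter (fun p => sameCluster c2 p)).filter
          (fun p => ¬ sameCluster c1 p) := by
    rw [Finset.filter_filter]
    exact Finset.filter_congr (fun p _ => by tauto)
  have h2 : (offDiagPairs V).filter (fun p => sameCluster c1 p ∧ sameCluster c2 p)
      = ((offDiagPairs V).filter (fun p => sameCluster c2 p)).filter
          (fun p => sameCluster c1 p) := by
    rw [Finset.filter_filter]
    exact Finset.filter_congr (fun p _ => by tauto)
  rw [a01, a11, samePairCount, h1, h2, add_comm]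
  exact Finset.card_filter_add_card_filter_not _

end Aux

lemma mul_succ_le_of_lt' (A q i : ℕ) (h : q < i) : A * q + A ≤ A * i := by
  have h2 : A * (q + 1) ≤ A * i := Nat.mul_le_mul_left A h
  rw [Nat.mul_add, Nat.mul_one] at h2
  exact h2

lemma card_interval_le' (n a b : ℕ) :
    ((Finset.univ : Finset (Fin n)).filter (fun v => a ≤ v.val ∧ v.val < b)).card ≤ b - a := by
  rw [← Nat.card_Ico a b]
  apply Finset.card_le_card_of_injOn (fun v => v.val)
  · intro v hv
    rw [Finset.mem_coe, Finset.mem_filter] at hv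
    exact Finset.mem_Ico.2 hv.2
  · intro v _ w _ h
    exact Fin.val_injective h

lemma card_interval' (n a b : ℕ) (hb : b ≤ n) :
    ((Finset.univ : Finset (Fin n)).filter (fun v => a ≤ v.val ∧ v.val < b)).card = b - a := by
  refine le_antisymm (card_interval_le' n a b) ?_
  by_cases hab : b ≤ a
  · simp [Nat.sub_eq_zero_of_le hab]
  · push_neg at hab
    have hn : 0 < n := lt_of_le_of_lt (Nat.zero_le a) (lt_of_lt_of_le hab hb)
    rw [← Nat.card_Ico a b]
    apply Finset.card_le_card_of_injOn (fun m => (⟨m % n, Nat.mod_lt m hn⟩ : Fin n))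
    · intro m hm
      rw [Finset.mem_coe, Finset.mem_Ico] at hm
      have hmn : m < n := lt_of_lt_of_le hm.2 hb
      simp [Finset.mem_filter, Nat.mod_eq_of_lt hmn, hm.1, hm.2]
    · intro m hm m' hm' h
      rw [Finset.mem_coe, Finset.mem_Ico] at hm hm'
      have hmn : m < n := lt_of_lt_of_le hm.2 hb
      have hmn' : m' < n := lt_of_lt_of_le hm'.2 hb
      simpa [Fin.ext_iff, Nat.mod_eq_of_lt hmn, Nat.mod_eq_of_lt hmn'] using h

lemma blockIdx_even_iff' (M v i : ℕ) :
    blockIdx 3 M v = 2 * i ↔ ((3 + M) * i ≤ v ∧ v < (3 + M) * i + 3) := by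
  have hpos : 0 < 3 + M := by omega
  have hdm := Nat.div_add_mod v (3 + M)
  have hmlt := Nat.mod_lt v hpos
  rw [blockIdx]
  rcases lt_trichotomy (v / (3 + M)) i with h | h | h
  · have h2 := mul_succ_le_of_lt' (3 + M) _ _ h
    split <;> omega
  · rw [h] at hdm ⊢; split <;> omega
  · have h2 := mul_succ_le_of_lt' (3 + M) _ _ h
    split <;> omega

lemma blockIdx_odd_iff' (M v i : ℕ) :
    blockIdx 3 M v = 2 * i + 1 ↔ ((3 + M) * i + 3 ≤ v ∧ v < (3 + M) * (i + 1)) := by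
  have hpos : 0 < 3 + M := by omega
  have hdm := Nat.div_add_mod v (3 + M)
  have hmlt := Nat.mod_lt v hpos
  have hi1 : (3 + M) * (i + 1) = (3 + M) * i + (3 + M) := by ring
  rw [blockIdx, hi1]
  rcases lt_trichotomy (v / (3 + M)) i with h | h | h
  · have h2 := mul_succ_le_of_lt' (3 + M) _ _ h
    split <;> omega
  · rw [h] at hdm ⊢; split <;> omega
  · have h2 := mul_succ_le_of_lt' (3 + M) _ _ h
    split <;> omega

lemma natural_fiber_card' (K M : ℕ) (k : ℕ) (hk : k < 2 * K) :
    ((Finset.univ : Finset (Fin (K * (3 + M)))).filter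
        (fun v => naturalLabel 3 M v = k)).card = if k % 2 = 0 then 3 else M := by
  have hle : ∀ i, i < K → (3 + M) * (i + 1) ≤ K * (3 + M) := by
    intro i hi
    rw [mul_comm K (3 + M)]
    exact Nat.mul_le_mul_left _ hi
  rcases Nat.even_or_odd k with ⟨i, hi⟩ | ⟨i, hi⟩
  · subst hi
    have hiK : i < K := by omega
    have hiff : ∀ v : Fin (K * (3 + M)), (naturalLabel 3 M v = i + i) ↔
        ((3 + M) * i ≤ v.val ∧ v.val < (3 + M) * i + 3) := by
      intro v
      rw [naturalLabel, show i + i = 2 * i by ring, blockIdx_even_iff']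
    have h2 : (3 + M) * (i + 1) = (3 + M) * i + 3 + M := by ring
    rw [Finset.filter_congr (fun v _ => by rw [hiff v]),
      card_interval' _ _ _ (by have := hle i hiK; omega)]
    simp only [show (i + i) % 2 = 0 by omega, if_true]
    omega
  · subst hi
    have hiK : i < K := by omega
    have hiff : ∀ v : Fin (K * (3 + M)), (naturalLabel 3 M v = 2 * i + 1) ↔
        ((3 + M) * i + 3 ≤ v.val ∧ v.val < (3 + M) * (i + 1)) := by
      intro v
      rw [naturalLabel, blockIdx_odd_iff']
    have h2 : (3 + M) * (i + 1) = (3 + M) * i + 3 + M := by ring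
    rw [Finset.filter_congr (fun v _ => by rw [hiff v]),
      card_interval' _ _ _ (hle i hiK)]
    rw [if_neg (by omega), h2]
    omega

lemma natural_image' (K M : ℕ) (hM : 1 ≤ M) :
    (Finset.univ : Finset (Fin (K * (3 + M)))).image (naturalLabel 3 M) =
      Finset.range (2 * K) := by
  apply Finset.Subset.antisymm
  · intro k hk
    obtain ⟨v, -, rfl⟩ := Finset.mem_image.1 hk
    rw [Finset.mem_range, naturalLabel, blockIdx]
    have hq : v.val / (3 + M) < K := by
      rw [Nat.div_lt_iff_lt_mul (by omega)]
      have := v.isLt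
      omega
    split <;> omega
  · intro k hk
    rw [Finset.mem_range] at hk
    rw [Finset.mem_image]
    rcases Nat.even_or_odd k with ⟨i, hi⟩ | ⟨i, hi⟩
    · have hiK : i < K := by omega
      have hv : (3 + M) * i < K * (3 + M) := by
        have := mul_succ_le_of_lt' (3 + M) i K hiK
        rw [mul_comm K (3 + M)]
        omega
      refine ⟨⟨(3 + M) * i, hv⟩, Finset.mem_univ _, ?_⟩
      rw [naturalLabel, show k = 2 * i by omega, blockIdx_even_iff']
      simp
    · have hiK : i < K := by omega
      have hv : (3 + M) * i + 3 < K * (3 + M) := by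
        have := mul_succ_le_of_lt' (3 + M) i K hiK
        rw [mul_comm K (3 + M)]
        omega
      refine ⟨⟨(3 + M) * i + 3, hv⟩, Finset.mem_univ _, ?_⟩
      rw [naturalLabel, show k = 2 * i + 1 by omega, blockIdx_odd_iff']
      have h2 : (3 + M) * (i + 1) = (3 + M) * i + 3 + M := by ring
      simp only [Fin.val_mk]
      omega

lemma sum_alt' (a b : ℕ) (K : ℕ) :
    ∑ k ∈ Finset.range (2 * K), (if k % 2 = 0 then a else b) = K * (a + b) := by
  induction K with
  | zero => simp
  | succ K ih =>
    rw [show 2 * (K + 1) = (2 * K + 1) + 1 by ring, Finset.sum_range_succ,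
      Finset.sum_range_succ, ih]
    rw [show (2 * K) % 2 = 0 by omega, show (2 * K + 1) % 2 = 1 by omega]
    simp
    ring

lemma uLabel_samePairCount_le' (n J : ℕ) (hJ : 1 ≤ J) (hJn : J ≤ n) :
    samePairCount (uLabel J : Fin n → ℕ) ≤
      J * ((n / J).choose 2) + (n - J * (n / J)).choose 2 := by
  have hL0 : 0 < n / J := Nat.div_pos hJn hJ
  rw [samePairCount_eq']
  have himage : (Finset.univ : Finset (Fin n)).image (uLabel J) ⊆ Finset.range (J + 1) := by
    intro k hk
    obtain ⟨v, -, rfl⟩ := Finset.mem_image.1 hk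
    rw [Finset.mem_range, uLabel]
    omega
  refine le_trans (Finset.sum_le_sum_of_subset himage) ?_
  rw [Finset.sum_range_succ]
  have hlast : ((Finset.univ : Finset (Fin n)).filter
      (fun v => uLabel J v = J)).card ≤ n - J * (n / J) := by
    refine le_trans (Finset.card_le_card ?_) (card_interval_le' n (J * (n / J)) n)
    intro v hv
    rw [Finset.mem_filter] at hv ⊢
    refine ⟨hv.1, ?_, v.isLt⟩
    have h1 : J ≤ v.val / (n / J) := by
      have := hv.2
      rw [uLabel] at this
      omega
    calc J * (n / J) ≤ (v.val / (n / J)) * (n / J) := Nat.mul_le_mul_right _ h1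
      _ ≤ v.val := Nat.div_mul_le_self _ _
  have hrest : ∀ k ∈ Finset.range J,
      ((Finset.univ : Finset (Fin n)).filter
        (fun v => uLabel J v = k)).card.choose 2 ≤ (n / J).choose 2 := by
    intro k hk
    rw [Finset.mem_range] at hk
    apply Nat.choose_le_choose
    have hcard : ((Finset.univ : Finset (Fin n)).filter
        (fun v => uLabel J v = k)).card ≤ (n / J) * (k + 1) - (n / J) * k := by
      refine le_trans (Finset.card_le_card ?_)
        (card_interval_le' n ((n / J) * k) ((n / J) * (k + 1)))
      intro v hv
      rw [Finset.mem_filter] at hv ⊢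
      have h1 : v.val / (n / J) = k := by
        have := hv.2
        rw [uLabel] at this
        omega
      have hdm := Nat.div_add_mod v.val (n / J)
      rw [h1] at hdm
      have hml := Nat.mod_lt v.val hL0
      have hmu : (n / J) * (k + 1) = (n / J) * k + (n / J) := by ring
      exact ⟨hv.1, by omega, by omega⟩
    have hmu : (n / J) * (k + 1) = (n / J) * k + (n / J) := by ring
    omega
  have hsum : ∑ k ∈ Finset.range J,
      ((Finset.univ : Finset (Fin n)).filter
        (fun v => uLabel J v = k)).card.choose 2 ≤ J * ((n / J).choose 2) := by
    refine le_trans (Finset.sum_le_sum hrest) ?_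
    rw [Finset.sum_const, Finset.card_range, smul_eq_mul]
  exact Nat.add_le_add hsum (Nat.choose_le_choose 2 hlast)

end BadComm


open BadComm Filter

set_option maxHeartbeats 1000000 in
/-- with `N₁ = 3`, `J = xK`, `N₂ = x²K`, the Jaccard similarity between
`𝐔_{K,3,x²K,xK}` and `𝐕_{K,3,x²K}` satisfies
`0 ≤ S < (4K³x³ + 4K²x²)/((1/2)K³x⁴ − (1/2)K²x² + 3K)` and tends to `0` as `x → ∞`. -/
theorem statement10 (K : ℕ) (hK : 1 ≤ K) :
    (∀ x : ℕ, 1 ≤ x →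
      0 ≤ jaccard (uLabel (x * K) : Fin (K * (3 + x ^ 2 * K)) → ℕ)
            (naturalLabel 3 (x ^ 2 * K)) ∧
      jaccard (uLabel (x * K) : Fin (K * (3 + x ^ 2 * K)) → ℕ)
            (naturalLabel 3 (x ^ 2 * K)) <
        (4 * (K : ℝ) ^ 3 * (x : ℝ) ^ 3 + 4 * (K : ℝ) ^ 2 * (x : ℝ) ^ 2) /
          ((1 / 2) * (K : ℝ) ^ 3 * (x : ℝ) ^ 4 - (1 / 2) * (K : ℝ) ^ 2 * (x : ℝ) ^ 2
            + 3 * (K : ℝ))) ∧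
    Tendsto (fun x : ℕ =>
        jaccard (uLabel (x * K) : Fin (K * (3 + x ^ 2 * K)) → ℕ)
          (naturalLabel 3 (x ^ 2 * K)))
      atTop (nhds 0) := by
  have hK1 : (1 : ℝ) ≤ K := by exact_mod_cast hK
  have hK0 : (0 : ℝ) ≤ K := by linarith
  have main : ∀ x : ℕ, 1 ≤ x →
      0 ≤ jaccard (uLabel (x * K) : Fin (K * (3 + x ^ 2 * K)) → ℕ)
            (naturalLabel 3 (x ^ 2 * K)) ∧
      jaccard (uLabel (x * K) : Fin (K * (3 + x ^ 2 * K)) → ℕ)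
            (naturalLabel 3 (x ^ 2 * K)) <
        (4 * (K : ℝ) ^ 3 * (x : ℝ) ^ 3 + 4 * (K : ℝ) ^ 2 * (x : ℝ) ^ 2) /
          ((1 / 2) * (K : ℝ) ^ 3 * (x : ℝ) ^ 4 - (1 / 2) * (K : ℝ) ^ 2 * (x : ℝ) ^ 2
            + 3 * (K : ℝ)) := by
    intro x hx
    have hx1 : (1 : ℝ) ≤ x := by exact_mod_cast hx
    have hx0 : (0 : ℝ) ≤ x := by linarith
    have hJ1 : 1 ≤ x * K := Nat.mul_pos hx hK
    have hM1 : 1 ≤ x ^ 2 * K := Nat.mul_pos (Nat.pow_pos hx) hK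
    have hJn : x * K ≤ K * (3 + x ^ 2 * K) := by nlinarith
    -- upper bound on a11
    have hLle : (K * (3 + x ^ 2 * K)) / (x * K) ≤ x * K + 3 := by
      have h1 : K * (3 + x ^ 2 * K) ≤ (x * K) * (x * K + 3) := by nlinarith
      calc (K * (3 + x ^ 2 * K)) / (x * K) ≤ ((x * K) * (x * K + 3)) / (x * K) :=
            Nat.div_le_div_right h1
        _ = x * K + 3 := Nat.mul_div_cancel_left _ hJ1
    have hrem : K * (3 + x ^ 2 * K) - (x * K) * ((K * (3 + x ^ 2 * K)) / (x * K)) ≤ x * K := by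
      have hdm := Nat.div_add_mod (K * (3 + x ^ 2 * K)) (x * K)
      have hml := Nat.mod_lt (K * (3 + x ^ 2 * K)) hJ1
      omega
    have hspc1 : samePairCount (uLabel (x * K) : Fin (K * (3 + x ^ 2 * K)) → ℕ) ≤
        (x * K) * ((x * K + 3).choose 2) + (x * K).choose 2 :=
      (uLabel_samePairCount_le' _ (x * K) hJ1 hJn).trans
        (Nat.add_le_add (Nat.mul_le_mul_left _ (Nat.choose_le_choose 2 hLle))
          (Nat.choose_le_choose 2 hrem))
    have ha11 : a11 (uLabel (x * K) : Fin (K * (3 + x ^ 2 * K)) → ℕ) (naturalLabel 3 (x ^ 2 * K))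
        ≤ (x * K) * ((x * K + 3).choose 2) + (x * K).choose 2 :=
      (a11_le' _ _).trans hspc1
    -- value of samePairCount of the natural clustering
    have hD : samePairCount (naturalLabel 3 (x ^ 2 * K) : Fin (K * (3 + x ^ 2 * K)) → ℕ) =
        K * (3 + (x ^ 2 * K).choose 2) := by
      rw [samePairCount_eq', natural_image' K _ hM1]
      rw [Finset.sum_congr rfl (fun k hk => by
        rw [natural_fiber_card' K _ k (Finset.mem_range.1 hk),
          apply_ite (fun m : ℕ => m.choose 2)])]
      rw [sum_alt']
      norm_num [Nat.choose]
    have hDpos : 0 < K * (3 + (x ^ 2 * K).choose 2) := Nat.mul_pos hK (by omega)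
    have hDposr : (0 : ℝ) < (K * (3 + (x ^ 2 * K).choose 2) : ℕ) := by exact_mod_cast hDpos
    have hDreal : ((K * (3 + (x ^ 2 * K).choose 2) : ℕ) : ℝ) =
        (1 / 2) * (K : ℝ) ^ 3 * (x : ℝ) ^ 4 - (1 / 2) * (K : ℝ) ^ 2 * (x : ℝ) ^ 2
          + 3 * (K : ℝ) := by
      push_cast [Nat.cast_choose_two]
      ring
    -- numerator strict bound
    have hy : (1 : ℝ) ≤ (x : ℝ) * K := by nlinarith
    have hy2 : (x : ℝ) * K ≤ ((x : ℝ) * K) ^ 2 := by nlinarith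
    have hy3 : ((x : ℝ) * K) ^ 2 ≤ ((x : ℝ) * K) ^ 3 := by nlinarith
    have key : ∀ y : ℝ, 1 ≤ y →
        y * ((y + 3) * (y + 3 - 1) / 2) + y * (y - 1) / 2 < 4 * y ^ 3 + 4 * y ^ 2 := by
      intro y hy'
      have k1 : 0 ≤ (y - 1) * y := mul_nonneg (by linarith) (by linarith)
      have k2 : 0 ≤ (y - 1) * y ^ 2 := mul_nonneg (by linarith) (by nlinarith)
      nlinarith [k1, k2, hy']
    have hNum : (((x * K) * ((x * K + 3).choose 2) + (x * K).choose 2 : ℕ) : ℝ) <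
        4 * (K : ℝ) ^ 3 * (x : ℝ) ^ 3 + 4 * (K : ℝ) ^ 2 * (x : ℝ) ^ 2 := by
      have h := key ((x : ℝ) * K) hy
      calc (((x * K) * ((x * K + 3).choose 2) + (x * K).choose 2 : ℕ) : ℝ)
          = (x : ℝ) * K * (((x : ℝ) * K + 3) * ((x : ℝ) * K + 3 - 1) / 2)
            + (x : ℝ) * K * ((x : ℝ) * K - 1) / 2 := by
            push_cast [Nat.cast_choose_two]
            ring
        _ < 4 * ((x : ℝ) * K) ^ 3 + 4 * ((x : ℝ) * K) ^ 2 := h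
        _ = 4 * (K : ℝ) ^ 3 * (x : ℝ) ^ 3 + 4 * (K : ℝ) ^ 2 * (x : ℝ) ^ 2 := by ring
    have ha11r : ((a11 (uLabel (x * K) : Fin (K * (3 + x ^ 2 * K)) → ℕ)
        (naturalLabel 3 (x ^ 2 * K)) : ℕ) : ℝ) <
        4 * (K : ℝ) ^ 3 * (x : ℝ) ^ 3 + 4 * (K : ℝ) ^ 2 * (x : ℝ) ^ 2 :=
      lt_of_le_of_lt (by exact_mod_cast ha11) hNum
    have hsum := a01_add_a11' (uLabel (x * K) : Fin (K * (3 + x ^ 2 * K)) → ℕ)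
      (naturalLabel 3 (x ^ 2 * K))
    rw [hD] at hsum
    constructor
    · unfold jaccard
      apply div_nonneg (Nat.cast_nonneg _)
      positivity
    · unfold jaccard
      have hge : ((K * (3 + (x ^ 2 * K).choose 2) : ℕ) : ℝ) ≤
          ((a10 (uLabel (x * K) : Fin (K * (3 + x ^ 2 * K)) → ℕ)
            (naturalLabel 3 (x ^ 2 * K)) : ℕ) : ℝ) +
          ((a01 (uLabel (x * K) : Fin (K * (3 + x ^ 2 * K)) → ℕ)
            (naturalLabel 3 (x ^ 2 * K)) : ℕ) : ℝ) +
          ((a11 (uLabel (x * K) : Fin (K * (3 + x ^ 2 * K)) → ℕ)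
            (naturalLabel 3 (x ^ 2 * K)) : ℕ) : ℝ) := by
        rw [← hsum]
        push_cast
        have := Nat.cast_nonneg (α := ℝ) (a10 (uLabel (x * K) : Fin (K * (3 + x ^ 2 * K)) → ℕ)
          (naturalLabel 3 (x ^ 2 * K)))
        linarith
      calc _ ≤ ((a11 (uLabel (x * K) : Fin (K * (3 + x ^ 2 * K)) → ℕ)
            (naturalLabel 3 (x ^ 2 * K)) : ℕ) : ℝ) /
            ((K * (3 + (x ^ 2 * K).choose 2) : ℕ) : ℝ) :=
          div_le_div_of_nonneg_left (Nat.cast_nonneg _) hDposr hge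
        _ < (4 * (K : ℝ) ^ 3 * (x : ℝ) ^ 3 + 4 * (K : ℝ) ^ 2 * (x : ℝ) ^ 2) /
            ((K * (3 + (x ^ 2 * K).choose 2) : ℕ) : ℝ) := by
          exact (div_lt_div_iff_of_pos_right hDposr).2 ha11r
        _ = _ := by rw [hDreal]
  refine ⟨main, ?_⟩
  have h32 : Tendsto (fun x : ℕ => (32 : ℝ) / x) atTop (nhds 0) :=
    tendsto_const_div_atTop_nhds_zero_nat 32
  refine tendsto_of_tendsto_of_tendsto_of_le_of_le' tendsto_const_nhds h32 ?_ ?_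
  · refine Filter.Eventually.of_forall (fun x => ?_)
    unfold jaccard
    apply div_nonneg (Nat.cast_nonneg _)
    positivity
  · filter_upwards [eventually_ge_atTop 2] with x hx2
    have hx1 : 1 ≤ x := by omega
    have hlt := (main x hx1).2
    refine hlt.le.trans ?_
    have hx2r : (2 : ℝ) ≤ x := by exact_mod_cast hx2
    have hx0 : (0 : ℝ) < x := by linarith
    have hx4 : (4 : ℝ) ≤ (x : ℝ) ^ 2 := by nlinarith
    have f1 : (K : ℝ) ^ 3 * (x : ℝ) ^ 4 ≥ (K : ℝ) ^ 2 * (x : ℝ) ^ 4 := by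
      nlinarith [mul_nonneg (mul_nonneg (sub_nonneg.2 hK1) (sq_nonneg (K : ℝ)))
        (pow_nonneg hx0.le 4)]
    have f2 : (K : ℝ) ^ 2 * (x : ℝ) ^ 4 ≥ 4 * (K : ℝ) ^ 2 * (x : ℝ) ^ 2 := by
      nlinarith [mul_nonneg (mul_nonneg (sq_nonneg (K : ℝ)) (sq_nonneg (x : ℝ)))
        (sub_nonneg.2 hx4)]
    have hDenpos : (0 : ℝ) < (1 / 2) * (K : ℝ) ^ 3 * (x : ℝ) ^ 4
        - (1 / 2) * (K : ℝ) ^ 2 * (x : ℝ) ^ 2 + 3 * (K : ℝ) := by nlinarith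
    rw [div_le_div_iff₀ hDenpos hx0]
    have hKx : (2 : ℝ) ≤ (K : ℝ) * x := by nlinarith
    have e1 : (K : ℝ) ^ 3 * (x : ℝ) ^ 4 ≥ 2 * (K : ℝ) ^ 2 * (x : ℝ) ^ 3 := by
      nlinarith [mul_nonneg (mul_nonneg (sq_nonneg (K : ℝ)) (pow_nonneg hx0.le 3))
        (sub_nonneg.2 hKx)]
    have e2 : (K : ℝ) ^ 2 * (x : ℝ) ^ 3 ≥ 2 * (K : ℝ) ^ 2 * (x : ℝ) ^ 2 := by
      nlinarith [mul_nonneg (mul_nonneg (sq_nonneg (K : ℝ)) (sq_nonneg (x : ℝ)))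
        (sub_nonneg.2 hx2r)]
    nlinarith [e1, e2, mul_nonneg (sq_nonneg (K : ℝ)) (sq_nonneg (x : ℝ)), hK0]
end
end
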